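/- arXiv:1212.6201 — 4 statements merged into one kernel-verified Lean document; each statement's English description precedes it below -/
import Mathlib

section
/- Let n : P(Ω) → F be an elementary numerosity and let β > 0 be an element of F. Define ν : P(Ω) → [0,+∞] by ν(A) = sh(n(A)/β). Then ν is a finitely additive measure defined on all subsets of Ω: ν(∅) = 0 and ν(A ∪ B) = ν(A) + ν(B) for all disjoint A, B ⊆ Ω (with the convention x + ∞ = ∞). Moreover, ν({x}) = 0 for every point x ∈ Ω if and only if β is an infinite element of F. -/
open scoped ENNReal

/-- ξ is infinitesimal w.r.t. the embedding ι : ℝ → F. -/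
def Infinitesimal {F : Type*} [Field F] [LinearOrder F] [IsStrictOrderedRing F] (ι : ℝ →+*o F) (ξ : F) : Prop :=
  ∀ k : ℕ, 0 < k → -ι (1 / k) < ξ ∧ ξ < ι (1 / k)

/-- ξ is a finite element of F w.r.t. the embedding ι : ℝ → F. -/
def IsFiniteElem {F : Type*} [Field F] [LinearOrder F] [IsStrictOrderedRing F] (ι : ℝ →+*o F) (ξ : F) : Prop :=
  ∃ k : ℤ, -ι k < ξ ∧ ξ < ι k

-- The shadow (standard part) of ξ, valued in [0,+∞]: the unique real r with
-- ξ - ι r infinitesimal if it exists (converted via `ENNReal.ofReal`), and +∞ otherwise.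
open scoped Classical in
noncomputable def sh {F : Type*} [Field F] [LinearOrder F] [IsStrictOrderedRing F] (ι : ℝ →+*o F) (ξ : F) : ℝ≥0∞ :=
  if h : ∃ r : ℝ, Infinitesimal ι (ξ - ι r) then ENNReal.ofReal h.choose else ⊤

section Aux
variable {F : Type*} [Field F] [LinearOrder F] [IsStrictOrderedRing F] (ι : ℝ →+*o F)

lemma iota_sm : StrictMono ι :=
  (OrderHomClass.monotone ι).strictMono_of_injective ι.toRingHom.injective

lemma infsml_add {a b : F} (ha : Infinitesimal ι a) (hb : Infinitesimal ι b) :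
    Infinitesimal ι (a + b) := by
  intro k hk
  obtain ⟨ha1, ha2⟩ := ha (2 * k) (by omega)
  obtain ⟨hb1, hb2⟩ := hb (2 * k) (by omega)
  have hsum : ι (1 / ((2 * k : ℕ) : ℝ)) + ι (1 / ((2 * k : ℕ) : ℝ)) = ι (1 / (k : ℝ)) := by
    rw [← map_add]
    congr 1
    push_cast
    rw [← add_div, show (1:ℝ) + 1 = 2 by norm_num,
      div_eq_div_iff (by positivity) (by positivity)]
    ring
  constructor <;> linarith

lemma infsml_neg {a : F} (ha : Infinitesimal ι a) : Infinitesimal ι (-a) := by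
  intro k hk
  obtain ⟨h1, h2⟩ := ha k hk
  constructor <;> linarith

lemma infsml_zero : Infinitesimal ι 0 := by
  intro k hk
  have : ι 0 < ι (1 / (k : ℝ)) := iota_sm ι (by positivity)
  rw [map_zero] at this
  constructor <;> linarith

lemma inf_real_eq_zero {r : ℝ} (h : Infinitesimal ι (ι r)) : r = 0 := by
  by_contra hr
  obtain ⟨n, hn⟩ := exists_nat_one_div_lt (abs_pos.mpr hr)
  obtain ⟨h1, h2⟩ := h (n + 1) (by omega)
  rw [← map_neg] at h1
  have e1 : -(1 / ((n : ℝ) + 1)) < r := by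
    have := (iota_sm ι).lt_iff_lt.mp (by push_cast at h1 ⊢; exact h1)
    linarith
  have e2 : r < 1 / ((n : ℝ) + 1) := by
    have := (iota_sm ι).lt_iff_lt.mp (by push_cast at h2 ⊢; exact h2)
    linarith
  rcases abs_cases r with ⟨he, _⟩ | ⟨he, _⟩ <;> rw [he] at hn <;> linarith

lemma shadow_unique {ξ : F} {r s : ℝ} (h1 : Infinitesimal ι (ξ - ι r))
    (h2 : Infinitesimal ι (ξ - ι s)) : r = s := by
  have heq : ι (s - r) = (ξ - ι r) + -(ξ - ι s) := by rw [map_sub]; ring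
  have : Infinitesimal ι (ι (s - r)) := by
    rw [heq]; exact infsml_add ι h1 (infsml_neg ι h2)
  have := inf_real_eq_zero ι this
  linarith

lemma sh_eq {ξ : F} {r : ℝ} (h : Infinitesimal ι (ξ - ι r)) :
    sh ι ξ = ENNReal.ofReal r := by
  have hex : ∃ s : ℝ, Infinitesimal ι (ξ - ι s) := ⟨r, h⟩
  rw [sh, dif_pos hex]
  congr 1
  exact shadow_unique ι hex.choose_spec h

lemma sh_eq_top {ξ : F} (h : ¬ ∃ r : ℝ, Infinitesimal ι (ξ - ι r)) :
    sh ι ξ = ⊤ := by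
  rw [sh, dif_neg h]

lemma shadow_nonneg {ξ : F} {r : ℝ} (hξ : 0 ≤ ξ) (h : Infinitesimal ι (ξ - ι r)) :
    0 ≤ r := by
  by_contra hr
  push_neg at hr
  obtain ⟨n, hn⟩ := exists_nat_one_div_lt (neg_pos.mpr hr)
  obtain ⟨_, h2⟩ := h (n + 1) (by omega)
  have hlt : r + 1 / ((n : ℝ) + 1) < 0 := by linarith
  have hx : ξ < ι (r + 1 / ((n : ℝ) + 1)) := by
    rw [map_add]
    push_cast at h2
    linarith
  have : ι (r + 1 / ((n : ℝ) + 1)) < ι 0 := iota_sm ι hlt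
  rw [map_zero] at this
  linarith

lemma finite_of_shadow {ξ : F} (h : ∃ r : ℝ, Infinitesimal ι (ξ - ι r)) :
    IsFiniteElem ι ξ := by
  obtain ⟨r, hr⟩ := h
  obtain ⟨h1, h2⟩ := hr 1 one_pos
  have hone : ι (1 / ((1 : ℕ) : ℝ)) = 1 := by norm_num
  rw [hone] at h1 h2
  refine ⟨⌈|r|⌉ + 1, ?_, ?_⟩
  · have hle : (-(⌈|r|⌉ + 1 : ℤ) : ℝ) ≤ r - 1 := by
      have hc := Int.le_ceil |r|
      have ha := neg_abs_le r
      push_cast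
      linarith
    have := (OrderHomClass.monotone ι) hle
    rw [map_neg] at this
    have h3 : ι (r - 1) < ξ := by rw [map_sub, map_one]; linarith
    calc -ι ((⌈|r|⌉ + 1 : ℤ) : ℝ) ≤ ι (r - 1) := this
      _ < ξ := h3
  · have hle : r + 1 ≤ ((⌈|r|⌉ + 1 : ℤ) : ℝ) := by
      have hc := Int.le_ceil |r|
      have ha := le_abs_self r
      push_cast
      linarith
    have := (OrderHomClass.monotone ι) hle
    have h3 : ξ < ι (r + 1) := by rw [map_add, map_one]; linarith
    exact h3.trans_le this

lemma shadow_of_finite {ξ : F} (h : IsFiniteElem ι ξ) :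
    ∃ r : ℝ, Infinitesimal ι (ξ - ι r) := by
  obtain ⟨k, hk1, hk2⟩ := h
  set S : Set ℝ := {q | ι q < ξ} with hS
  have hne : S.Nonempty := ⟨-(k : ℝ), by simpa [hS, map_neg] using hk1⟩
  have hbdd : BddAbove S := ⟨(k : ℝ), fun q hq => ((iota_sm ι).lt_iff_lt.mp (hq.trans hk2)).le⟩
  refine ⟨sSup S, fun m hm => ⟨?_, ?_⟩⟩
  · have hm0 : (0 : ℝ) < 1 / (m : ℝ) := by positivity
    have hlt : sSup S - 1 / (m : ℝ) < sSup S := by linarith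
    obtain ⟨q, hqS, hq⟩ := exists_lt_of_lt_csSup hne hlt
    have h1 : ι (sSup S - 1 / (m : ℝ)) < ι q := iota_sm ι hq
    have h2 : ι q < ξ := hqS
    rw [map_sub] at h1
    linarith
  · have hm0 : (0 : ℝ) < 1 / (2 * (m : ℝ)) := by positivity
    have hnot : sSup S + 1 / (2 * (m : ℝ)) ∉ S := by
      intro hmem
      have := le_csSup hbdd hmem
      linarith
    have hge : ξ ≤ ι (sSup S + 1 / (2 * (m : ℝ))) := not_lt.mp hnot
    rw [map_add] at hge
    have hlt2 : ι (1 / (2 * (m : ℝ))) < ι (1 / (m : ℝ)) := by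
      apply iota_sm ι
      have : (0 : ℝ) < (m : ℝ) := by positivity
      rw [div_lt_div_iff₀ (by positivity) (by positivity)]
      linarith
    linarith

lemma finite_mono {x y : F} (h0 : 0 ≤ x) (hxy : x ≤ y) (hf : IsFiniteElem ι y) :
    IsFiniteElem ι x := by
  obtain ⟨k, _, hk2⟩ := hf
  refine ⟨k, ?_, lt_of_le_of_lt hxy hk2⟩
  have : (0 : F) < ι (k : ℝ) := lt_of_le_of_lt (h0.trans hxy) hk2
  linarith

lemma sh_add {x y : F} (hx : 0 ≤ x) (hy : 0 ≤ y) :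
    sh ι (x + y) = sh ι x + sh ι y := by
  by_cases hex : ∃ r : ℝ, Infinitesimal ι (x - ι r)
  · by_cases hey : ∃ s : ℝ, Infinitesimal ι (y - ι s)
    · obtain ⟨r, hr⟩ := hex
      obtain ⟨s, hs⟩ := hey
      have hsum : Infinitesimal ι (x + y - ι (r + s)) := by
        have heq : x + y - ι (r + s) = (x - ι r) + (y - ι s) := by rw [map_add]; ring
        rw [heq]; exact infsml_add ι hr hs
      rw [sh_eq ι hsum, sh_eq ι hr, sh_eq ι hs,
        ENNReal.ofReal_add (shadow_nonneg ι hx hr) (shadow_nonneg ι hy hs)]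
    · have hxy : ¬ ∃ t : ℝ, Infinitesimal ι (x + y - ι t) := fun hxyt =>
        hey (shadow_of_finite ι
          (finite_mono ι hy (le_add_of_nonneg_left hx) (finite_of_shadow ι hxyt)))
      rw [sh_eq_top ι hxy, sh_eq_top ι hey, ]
      simp
  · have hxy : ¬ ∃ t : ℝ, Infinitesimal ι (x + y - ι t) := fun hxyt =>
      hex (shadow_of_finite ι
        (finite_mono ι hx (le_add_of_nonneg_right hy) (finite_of_shadow ι hxyt)))
    rw [sh_eq_top ι hxy, sh_eq_top ι hex, ]
    simp

lemma sh_eq_zero_iff {ξ : F} (hξ : 0 ≤ ξ) : sh ι ξ = 0 ↔ Infinitesimal ι ξ := by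
  constructor
  · intro h
    by_cases hex : ∃ r : ℝ, Infinitesimal ι (ξ - ι r)
    · obtain ⟨r, hr⟩ := hex
      rw [sh_eq ι hr] at h
      have hr0 : r = 0 :=
        le_antisymm (ENNReal.ofReal_eq_zero.mp h) (shadow_nonneg ι hξ hr)
      rw [hr0, map_zero, sub_zero] at hr
      exact hr
    · rw [sh_eq_top ι hex] at h
      simp at h
  · intro h
    have h0 : Infinitesimal ι (ξ - ι 0) := by rw [map_zero, sub_zero]; exact h
    rw [sh_eq ι h0, ENNReal.ofReal_zero]

lemma pos_cast_of_iota_pos {k : ℤ} (h : (0 : F) < ι (k : ℝ)) : (0 : ℝ) < (k : ℝ) := by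
  have h0 : ι (0 : ℝ) < ι (k : ℝ) := by rwa [map_zero]
  exact (iota_sm ι).lt_iff_lt.mp h0

lemma inv_infinitesimal_iff {β : F} (hβ : 0 < β) :
    Infinitesimal ι β⁻¹ ↔ ¬ IsFiniteElem ι β := by
  have hβinv : (0 : F) < β⁻¹ := inv_pos.mpr hβ
  have hmul : β * β⁻¹ = 1 := mul_inv_cancel₀ hβ.ne'
  constructor
  · rintro h ⟨k, hk1, hk2⟩
    have hk0 : (0 : F) < ι (k : ℝ) := hβ.trans hk2
    have hkR : (0 : ℝ) < (k : ℝ) := pos_cast_of_iota_pos ι hk0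
    have hkZ : (0 : ℤ) < k := by exact_mod_cast hkR
    have hkN : 0 < k.toNat := by omega
    obtain ⟨_, h2⟩ := h k.toNat hkN
    have hcast : ((k.toNat : ℕ) : ℝ) = (k : ℝ) := by
      rw [← Int.cast_natCast, Int.toNat_of_nonneg hkZ.le]
    rw [hcast] at h2
    have hmul2 : ι (1 / (k : ℝ)) * ι (k : ℝ) = 1 := by
      rw [← map_mul]
      rw [one_div_mul_cancel (by positivity)]
      exact map_one ι
    have hι1 : (0 : F) < ι (1 / (k : ℝ)) := hβinv.trans h2
    nlinarith
  · intro h k hk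
    have hι1 : (0 : F) < ι (1 / (k : ℝ)) := by
      have : ι 0 < ι (1 / (k : ℝ)) := iota_sm ι (by positivity)
      rwa [map_zero] at this
    refine ⟨by linarith, ?_⟩
    have hbig : ι ((2 * k : ℤ) : ℝ) ≤ β := by
      by_contra hc
      push_neg at hc
      apply h
      refine ⟨2 * k, ?_, hc⟩
      have : (0 : F) < ι ((2 * k : ℤ) : ℝ) := by
        have : ι 0 < ι ((2 * k : ℤ) : ℝ) := iota_sm ι (by push_cast; positivity)
        rwa [map_zero] at this
      linarith
    have hklt : ι (k : ℝ) < ι ((2 * k : ℤ) : ℝ) := by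
      apply iota_sm ι
      push_cast
      have : (0 : ℝ) < (k : ℝ) := by positivity
      linarith
    have hkβ : ι (k : ℝ) < β := hklt.trans_le hbig
    have hk0 : (0 : F) < ι (k : ℝ) := by
      have : ι 0 < ι (k : ℝ) := iota_sm ι (by positivity)
      rwa [map_zero] at this
    have hmul2 : ι (1 / (k : ℝ)) * ι (k : ℝ) = 1 := by
      rw [← map_mul, one_div_mul_cancel (by positivity)]
      exact map_one ι
    nlinarith

end Aux

/-- Given an elementary numerosity n and a positive β in F, the function
ν(A) = sh(n(A)/β) is a finitely additive measure on all subsets of Ω;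
it vanishes on all singletons iff β is an infinite element of F. -/
theorem stmt1 {Ω : Type*} [Nonempty Ω] {F : Type*} [Field F] [LinearOrder F] [IsStrictOrderedRing F] (ι : ℝ →+*o F)
    (n : Set Ω → F)
    (hnonneg : ∀ X : Set Ω, 0 ≤ n X)
    (hsingle : ∀ x : Ω, n {x} = 1)
    (hadd : ∀ A B : Set Ω, Disjoint A B → n (A ∪ B) = n A + n B)
    (β : F) (hβ : 0 < β) :
    sh ι (n ∅ / β) = 0 ∧
    (∀ A B : Set Ω, Disjoint A B →
      sh ι (n (A ∪ B) / β) = sh ι (n A / β) + sh ι (n B / β)) ∧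
    ((∀ x : Ω, sh ι (n {x} / β) = 0) ↔ ¬ IsFiniteElem ι β) := by
  have hempty : n ∅ = 0 := by
    have h := hadd ∅ ∅ (disjoint_bot_left)
    rw [Set.union_self] at h
    linarith
  refine ⟨?_, ?_, ?_⟩
  · rw [hempty, zero_div]
    exact (sh_eq_zero_iff ι le_rfl).mpr (infsml_zero ι)
  · intro A B hAB
    rw [hadd A B hAB, add_div]
    exact sh_add ι (div_nonneg (hnonneg A) hβ.le) (div_nonneg (hnonneg B) hβ.le)
  · have hkey : ∀ x : Ω, n {x} / β = β⁻¹ := fun x => by rw [hsingle x, one_div]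
    constructor
    · intro h
      obtain ⟨x⟩ := ‹Nonempty Ω›
      have h0 := h x
      rw [hkey x] at h0
      exact (inv_infinitesimal_iff ι hβ).mp
        ((sh_eq_zero_iff ι (inv_pos.mpr hβ).le).mp h0)
    · intro h x
      rw [hkey x]
      exact (sh_eq_zero_iff ι (inv_pos.mpr hβ).le).mpr
        ((inv_infinitesimal_iff ι hβ).mpr h)
end

section
/- Let (Ω, A, μ) be a non-atomic finitely additive measure, let B ⊆ A be a subring of sets such that every nonempty B ∈ B satisfies 0 < μ(B) < +∞, let m be a positive integer, let x₁, …, x_k ∈ Ω be finitely many points, and let A₁, …, A_n ∈ A be finitely many nonempty sets with μ(A_i) < +∞ for each i. Then there exists a finite subset λ ⊆ Ω such that: (1) x₁, …, x_k ∈ λ; (2) whenever A_i, A_j ∈ B and μ(A_i) = μ(A_j), the cardinalities satisfy |λ ∩ A_i| = |λ ∩ A_j|; and (3) whenever μ(A_j) ≠ 0, one has |λ ∩ A_j| > 0 and, for every i, | |λ ∩ A_i| / |λ ∩ A_j| − μ(A_i)/μ(A_j) | < 1/m. -/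
open scoped ENNReal

/-- A ring of sets over Ω: a nonempty family closed under finite unions,
finite intersections and relative complements. -/
structure IsRingOfSets {Ω : Type*} (𝒜 : Set (Set Ω)) : Prop where
  nonempty : 𝒜.Nonempty
  union_mem : ∀ A ∈ 𝒜, ∀ B ∈ 𝒜, A ∪ B ∈ 𝒜
  inter_mem : ∀ A ∈ 𝒜, ∀ B ∈ 𝒜, A ∩ B ∈ 𝒜
  diff_mem : ∀ A ∈ 𝒜, ∀ B ∈ 𝒜, A \ B ∈ 𝒜

section Auxiliary

variable {Ω : Type*} {𝒜 : Set (Set Ω)}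

theorem IsRingOfSets.empty_mem (h : IsRingOfSets 𝒜) : ∅ ∈ 𝒜 := by
  obtain ⟨B, hB⟩ := h.nonempty
  simpa using h.diff_mem B hB B hB

theorem IsRingOfSets.biUnion_mem (h : IsRingOfSets 𝒜) {ι : Type*} (s : Finset ι)
    (B : ι → Set Ω) (hB : ∀ i ∈ s, B i ∈ 𝒜) : (⋃ i ∈ s, B i) ∈ 𝒜 := by
  classical
  induction s using Finset.induction with
  | empty => simpa using h.empty_mem
  | @insert a s' hx' ih =>
    rw [Finset.set_biUnion_insert]
    exact h.union_mem _ (hB a (Finset.mem_insert_self a s'))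
      _ (ih fun i hi => hB i (Finset.mem_insert_of_mem hi))

theorem measure_biUnion_finset (h : IsRingOfSets 𝒜) (μ : Set Ω → ℝ≥0∞) (hμ0 : μ ∅ = 0)
    (hadd : ∀ A ∈ 𝒜, ∀ B ∈ 𝒜, Disjoint A B → μ (A ∪ B) = μ A + μ B)
    {ι : Type*} (s : Finset ι) (B : ι → Set Ω) (hB : ∀ i ∈ s, B i ∈ 𝒜)
    (hd : ∀ i ∈ s, ∀ j ∈ s, i ≠ j → Disjoint (B i) (B j)) :
    μ (⋃ i ∈ s, B i) = ∑ i ∈ s, μ (B i) := by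
  classical
  induction s using Finset.induction with
  | empty => simpa using hμ0
  | @insert a s' hx' ih =>
    rw [Finset.set_biUnion_insert, Finset.sum_insert hx']
    have hmem : (⋃ i ∈ s', B i) ∈ 𝒜 :=
      h.biUnion_mem s' B fun i hi => hB i (Finset.mem_insert_of_mem hi)
    have hdis : Disjoint (B a) (⋃ i ∈ s', B i) := by
      rw [Set.disjoint_iff_inter_eq_empty]
      ext ω
      simp only [Set.mem_inter_iff, Set.mem_iUnion, Set.mem_empty_iff_false, iff_false]
      rintro ⟨h1, i, hi, h2⟩
      have := hd a (Finset.mem_insert_self a s') i (Finset.mem_insert_of_mem hi)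
        (fun he => hx' (he ▸ hi))
      exact (Set.disjoint_iff_inter_eq_empty.1 this).subset ⟨h1, h2⟩
    rw [hadd _ (hB a (Finset.mem_insert_self a s')) _ hmem hdis, ih
      (fun i hi => hB i (Finset.mem_insert_of_mem hi))
      (fun i hi j hj => hd i (Finset.mem_insert_of_mem hi) j (Finset.mem_insert_of_mem hj))]

theorem measure_mono_ring (h : IsRingOfSets 𝒜) (μ : Set Ω → ℝ≥0∞)
    (hadd : ∀ A ∈ 𝒜, ∀ B ∈ 𝒜, Disjoint A B → μ (A ∪ B) = μ A + μ B)
    {S S' : Set Ω} (hS : S ∈ 𝒜) (hS' : S' ∈ 𝒜) (hsub : S ⊆ S') : μ S ≤ μ S' := by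
  have hdiff : S' \ S ∈ 𝒜 := h.diff_mem S' hS' S hS
  have hd : Disjoint S (S' \ S) := Set.disjoint_sdiff_right
  have : μ (S ∪ S' \ S) = μ S + μ (S' \ S) := hadd S hS _ hdiff hd
  rw [Set.union_diff_cancel hsub] at this
  rw [this]
  exact le_self_add

open scoped Classical in
noncomputable def patFn {ι : Type*} [Fintype ι] (B : ι → Set Ω) (ω : Ω) : Finset ι :=
  Finset.univ.filter (fun i => ω ∈ B i)

noncomputable def fibSet {ι : Type*} [Fintype ι] (B : ι → Set Ω) (T : Finset ι) : Set Ω :=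
  {ω | patFn B ω = T}

variable {ι : Type*} [Fintype ι] [DecidableEq ι]

theorem mem_pat_iff (B : ι → Set Ω) (ω : Ω) (i : ι) : i ∈ patFn B ω ↔ ω ∈ B i := by
  simp [patFn]

theorem mem_fib_iff (B : ι → Set Ω) (T : Finset ι) (ω : Ω) :
    ω ∈ fibSet B T ↔ ∀ i, ω ∈ B i ↔ i ∈ T := by
  constructor
  · intro h i; rw [← h]; exact (mem_pat_iff B ω i).symm
  · intro h
    show patFn B ω = T
    ext i; rw [mem_pat_iff]; exact h i

theorem fib_disjoint (B : ι → Set Ω) {T T' : Finset ι} (h : T ≠ T') :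
    Disjoint (fibSet B T) (fibSet B T') := by
  rw [Set.disjoint_iff_inter_eq_empty]
  ext ω
  simp only [Set.mem_inter_iff, Set.mem_empty_iff_false, iff_false]
  rintro ⟨h1, h2⟩
  exact h (h1.symm.trans h2)

theorem fib_mem_ring (h : IsRingOfSets 𝒜) (B : ι → Set Ω) (hB : ∀ i, B i ∈ 𝒜)
    {T : Finset ι} (hT : T.Nonempty) : fibSet B T ∈ 𝒜 := by
  classical
  obtain ⟨i₀, hi₀⟩ := hT
  have aux : ∀ s : Finset ι, ∀ C ∈ 𝒜,
      C ∩ {ω | ∀ i ∈ s, (ω ∈ B i ↔ i ∈ T)} ∈ 𝒜 := by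
    intro s
    induction s using Finset.induction with
    | empty => intro C hC; simpa using hC
    | @insert j s' hj ih =>
      intro C hC
      by_cases hjT : j ∈ T
      · have : C ∩ {ω | ∀ i ∈ insert j s', (ω ∈ B i ↔ i ∈ T)} =
            (C ∩ {ω | ∀ i ∈ s', (ω ∈ B i ↔ i ∈ T)}) ∩ B j := by
          ext ω
          simp only [Set.mem_inter_iff, Set.mem_setOf_eq, Finset.mem_insert]
          constructor
          · rintro ⟨hc, hall⟩
            exact ⟨⟨hc, fun i hi => hall i (Or.inr hi)⟩, (hall j (Or.inl rfl)).2 hjT⟩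
          · rintro ⟨⟨hc, hall⟩, hbj⟩
            refine ⟨hc, fun i hi => ?_⟩
            rcases hi with rfl | hi
            · exact ⟨fun _ => hjT, fun _ => hbj⟩
            · exact hall i hi
        rw [this]
        exact h.inter_mem _ (ih C hC) _ (hB j)
      · have : C ∩ {ω | ∀ i ∈ insert j s', (ω ∈ B i ↔ i ∈ T)} =
            (C ∩ {ω | ∀ i ∈ s', (ω ∈ B i ↔ i ∈ T)}) \ B j := by
          ext ω
          simp only [Set.mem_inter_iff, Set.mem_setOf_eq, Finset.mem_insert, Set.mem_diff]
          constructor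
          · rintro ⟨hc, hall⟩
            exact ⟨⟨hc, fun i hi => hall i (Or.inr hi)⟩,
              fun hbj => hjT ((hall j (Or.inl rfl)).1 hbj)⟩
          · rintro ⟨⟨hc, hall⟩, hbj⟩
            refine ⟨hc, fun i hi => ?_⟩
            rcases hi with rfl | hi
            · exact ⟨fun hb => absurd hb hbj, fun ht => absurd ht hjT⟩
            · exact hall i hi
        rw [this]
        exact h.diff_mem _ (ih C hC) _ (hB j)
  have : fibSet B T = B i₀ ∩ {ω | ∀ i ∈ (Finset.univ : Finset ι), (ω ∈ B i ↔ i ∈ T)} := by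
    ext ω
    rw [mem_fib_iff]
    simp only [Set.mem_inter_iff, Set.mem_setOf_eq, Finset.mem_univ, true_implies]
    constructor
    · intro hall; exact ⟨(hall i₀).2 hi₀, fun i => hall i⟩
    · rintro ⟨_, hall⟩; exact hall
  rw [this]
  exact aux Finset.univ (B i₀) (hB i₀)

theorem set_eq_biUnion_fib (B : ι → Set Ω) (i : ι) :
    B i = ⋃ T ∈ Finset.univ.filter (fun T : Finset ι => i ∈ T), fibSet B T := by
  ext ω
  simp only [Set.mem_iUnion, Finset.mem_filter, Finset.mem_univ, true_and]
  constructor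
  · intro hω
    exact ⟨patFn B ω, (mem_pat_iff B ω i).2 hω, rfl⟩
  · rintro ⟨T, hiT, hT⟩
    have := (mem_fib_iff B T ω).1 hT i
    exact this.2 hiT

theorem measure_set_eq_sum_fib (h : IsRingOfSets 𝒜) (μ : Set Ω → ℝ≥0∞) (hμ0 : μ ∅ = 0)
    (hadd : ∀ A ∈ 𝒜, ∀ B ∈ 𝒜, Disjoint A B → μ (A ∪ B) = μ A + μ B)
    (B : ι → Set Ω) (hB : ∀ i, B i ∈ 𝒜) (i : ι) :
    μ (B i) = ∑ T ∈ Finset.univ.filter (fun T : Finset ι => i ∈ T), μ (fibSet B T) := by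
  classical
  rw [set_eq_biUnion_fib B i]
  exact measure_biUnion_finset h μ hμ0 hadd _ _
    (fun T hT => fib_mem_ring h B hB ⟨i, (Finset.mem_filter.1 hT).2⟩)
    (fun T _ T' _ hne => fib_disjoint B hne)

theorem simultaneous_approx (v : ι → ℝ) {ε : ℝ} (hε : 0 < ε) (N₀ : ℕ) :
    ∃ q : ℕ, N₀ ≤ q ∧ 0 < q ∧ ∃ p : ι → ℤ, ∀ t, |(q : ℝ) * v t - p t| ≤ ε := by
  classical
  set N : ℕ := max N₀ 1 with hN
  obtain ⟨Q, hQ⟩ := exists_nat_gt (1 / ε)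
  have hQ0 : 0 < (Q : ℝ) := lt_trans (by positivity) hQ
  have hQε : 1 / (Q : ℝ) < ε := by
    rw [div_lt_iff₀ hQ0]
    calc (1 : ℝ) = ε * (1 / ε) := by field_simp
    _ < ε * Q := by exact mul_lt_mul_of_pos_left hQ hε
  set g : ℕ → (ι → ℤ) := fun a t => ⌊Int.fract ((a * N : ℕ) * v t) * Q⌋ with hg
  have hmaps : ∀ a ∈ Finset.range ((Q + 1) ^ Fintype.card ι + 1),
      g a ∈ Fintype.piFinset (fun _ : ι => Finset.Icc (0 : ℤ) Q) := by
    intro a _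
    rw [Fintype.mem_piFinset]
    intro t
    rw [Finset.mem_Icc]
    constructor
    · exact Int.floor_nonneg.2 (mul_nonneg (Int.fract_nonneg _) hQ0.le)
    · calc ⌊Int.fract ((a * N : ℕ) * v t) * Q⌋ ≤ ⌊(Q : ℝ)⌋ := by
            apply Int.floor_le_floor
            calc Int.fract ((a * N : ℕ) * v t) * Q ≤ 1 * Q := by
                  apply mul_le_mul_of_nonneg_right (Int.fract_lt_one _).le hQ0.le
            _ = Q := one_mul _
      _ = Q := Int.floor_natCast Q
  have hcard : (Fintype.piFinset (fun _ : ι => Finset.Icc (0 : ℤ) Q)).card <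
      (Finset.range ((Q + 1) ^ Fintype.card ι + 1)).card := by
    rw [Finset.card_range, Fintype.card_piFinset]
    simp only [Int.card_Icc]
    calc ∏ _i : ι, ((Q : ℤ) + 1 - 0).toNat = ∏ _i : ι, (Q + 1) := by
          apply Finset.prod_congr rfl; intro i _; simp
    _ = (Q + 1) ^ Fintype.card ι := by rw [Finset.prod_const, Finset.card_univ]
    _ < (Q + 1) ^ Fintype.card ι + 1 := Nat.lt_succ_self _
  obtain ⟨a, _, b, _, hab, hgab⟩ :=
    Finset.exists_ne_map_eq_of_card_lt_of_maps_to hcard hmaps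
  have key : ∀ a b : ℕ, a < b → g a = g b →
      ∃ q : ℕ, N₀ ≤ q ∧ 0 < q ∧ ∃ p : ι → ℤ, ∀ t, |(q : ℝ) * v t - p t| ≤ ε := by
    clear hab hgab
    clear_value g
    intro a b hlt hgab
    refine ⟨(b - a) * N, ?_, ?_, fun t => ⌊((b * N : ℕ) : ℝ) * v t⌋ - ⌊((a * N : ℕ) : ℝ) * v t⌋,
      ?_⟩
    · calc N₀ ≤ N := le_max_left _ _
      _ = 1 * N := (one_mul N).symm
      _ ≤ (b - a) * N := Nat.mul_le_mul_right N (by omega)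
    · have hN1 : 1 ≤ N := le_max_right _ _
      have : 1 ≤ b - a := by omega
      calc 0 < 1 * 1 := one_pos
      _ ≤ (b - a) * N := Nat.mul_le_mul this hN1
    · intro t
      set α : ℝ := ((a * N : ℕ) : ℝ) * v t with hα
      set β : ℝ := ((b * N : ℕ) : ℝ) * v t with hβ
      have hfl : ⌊Int.fract α * Q⌋ = ⌊Int.fract β * Q⌋ := by
        have h := congrFun hgab t
        simp only [hg] at h
        rw [← hα, ← hβ] at h
        exact h
      have hcast : ((⌊Int.fract α * Q⌋ : ℤ) : ℝ) = ((⌊Int.fract β * Q⌋ : ℤ) : ℝ) := by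
        exact_mod_cast congrArg (fun z : ℤ => (z : ℝ)) hfl
      have h1 := Int.floor_le (Int.fract α * Q)
      have h2 := Int.lt_floor_add_one (Int.fract α * Q)
      have h3 := Int.floor_le (Int.fract β * Q)
      have h4 := Int.lt_floor_add_one (Int.fract β * Q)
      have hfr : |Int.fract β - Int.fract α| < 1 / Q := by
        rw [abs_sub_lt_iff]
        constructor <;> rw [lt_div_iff₀ hQ0] <;> nlinarith
      have hqv : ((((b - a) * N : ℕ) : ℝ)) * v t = β - α := by
        rw [hα, hβ]
        have hle : a * N ≤ b * N := Nat.mul_le_mul_right N hlt.le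
        push_cast [Nat.sub_mul, Nat.cast_sub hle]
        ring
      rw [hqv]
      have : β - α - ((⌊β⌋ : ℤ) - (⌊α⌋ : ℤ) : ℤ) = Int.fract β - Int.fract α := by
        push_cast
        rw [Int.fract, Int.fract]
        ring
      rw [this]
      exact le_of_lt (lt_of_lt_of_le hfr hQε.le)
  rcases lt_or_gt_of_ne hab with hlt | hlt
  · exact key a b hlt hgab
  · exact key b a hlt hgab.symm

theorem exists_forall_ge {γ : Type*} (s : Finset γ) (P : γ → ℕ → Prop)
    (h : ∀ c ∈ s, ∃ N : ℕ, ∀ q : ℕ, N ≤ q → P c q) :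
    ∃ N : ℕ, ∀ q : ℕ, N ≤ q → ∀ c ∈ s, P c q := by
  classical
  induction s using Finset.induction with
  | empty => exact ⟨0, fun q _ c hc => absurd hc (Finset.notMem_empty c)⟩
  | @insert a s' ha ih =>
    obtain ⟨N1, hN1⟩ := h a (Finset.mem_insert_self a s')
    obtain ⟨N2, hN2⟩ := ih fun c hc => h c (Finset.mem_insert_of_mem hc)
    refine ⟨max N1 N2, fun q hq c hc => ?_⟩
    rcases Finset.mem_insert.1 hc with rfl | hc
    · exact hN1 q (le_trans (le_max_left _ _) hq)
    · exact hN2 q (le_trans (le_max_right _ _) hq) c hc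

theorem nat_eq_of_abs_cast_lt_one {a b : ℕ} (h : |(a : ℝ) - (b : ℝ)| < 1) : a = b := by
  rw [abs_lt] at h
  have h1 : (a : ℝ) < (b : ℝ) + 1 := by linarith [h.2]
  have h2 : (b : ℝ) < (a : ℝ) + 1 := by linarith [h.1]
  have h1' : a < b + 1 := by exact_mod_cast h1
  have h2' : b < a + 1 := by exact_mod_cast h2
  omega

end Auxiliary

set_option maxHeartbeats 2000000 in
/-- The combinatorial lemma: given a non-atomic finitely additive measure (Ω, 𝒜, μ),
a subring ℬ ⊆ 𝒜 whose nonempty sets have positive finite measure, a positive integer m,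
finitely many points x₁,…,x_k and finitely many nonempty sets A₁,…,A_n ∈ 𝒜 of finite
measure, there is a finite λ ⊆ Ω containing the points, counting sets of ℬ of equal
measure equally, and approximating all ratios of measures within 1/m. -/
theorem stmt3 {Ω : Type*} [Nonempty Ω] (𝒜 ℬ : Set (Set Ω))
    (h𝒜 : IsRingOfSets 𝒜) (hℬ : IsRingOfSets ℬ) (hℬ𝒜 : ℬ ⊆ 𝒜)
    (μ : Set Ω → ℝ≥0∞) (hμ0 : μ ∅ = 0)
    (hadd : ∀ A ∈ 𝒜, ∀ B ∈ 𝒜, Disjoint A B → μ (A ∪ B) = μ A + μ B)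
    (hna : ∀ A ∈ 𝒜, A.Finite → μ A = 0)
    (hℬpos : ∀ B ∈ ℬ, B.Nonempty → 0 < μ B ∧ μ B < ⊤)
    (m : ℕ) (hm : 0 < m) {k nsets : ℕ} (x : Fin k → Ω)
    (A : Fin nsets → Set Ω)
    (hAmem : ∀ i, A i ∈ 𝒜) (hAne : ∀ i, (A i).Nonempty) (hAfin : ∀ i, μ (A i) < ⊤) :
    ∃ lam : Set Ω, lam.Finite ∧
      (∀ i, x i ∈ lam) ∧
      (∀ i j, A i ∈ ℬ → A j ∈ ℬ → μ (A i) = μ (A j) →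
        (lam ∩ A i).ncard = (lam ∩ A j).ncard) ∧
      (∀ j, μ (A j) ≠ 0 → 0 < (lam ∩ A j).ncard ∧
        ∀ i, |((lam ∩ A i).ncard : ℝ) / ((lam ∩ A j).ncard : ℝ) -
          (μ (A i)).toReal / (μ (A j)).toReal| < 1 / (m : ℝ)) := by
  classical
  -- ℬ-restricted additivity
  have hBadd : ∀ S ∈ ℬ, ∀ S' ∈ ℬ, Disjoint S S' → μ (S ∪ S') = μ S + μ S' :=
    fun S hS S' hS' hd => hadd S (hℬ𝒜 hS) S' (hℬ𝒜 hS') hd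
  -- full fibers
  have hμA : ∀ i : Fin nsets, μ (A i) =
      ∑ T ∈ Finset.univ.filter (fun T : Finset (Fin nsets) => i ∈ T), μ (fibSet A T) :=
    fun i => measure_set_eq_sum_fib h𝒜 μ hμ0 hadd A hAmem i
  have hfibsub : ∀ (T : Finset (Fin nsets)) (i : Fin nsets), i ∈ T → fibSet A T ⊆ A i :=
    fun T i hi ω hω => ((mem_fib_iff A T ω).1 hω i).2 hi
  have hfibfin : ∀ T : Finset (Fin nsets), T.Nonempty → μ (fibSet A T) ≠ ⊤ := by
    rintro T ⟨i, hi⟩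
    exact ne_top_of_le_ne_top (hAfin i).ne
      (measure_mono_ring h𝒜 μ hadd (fib_mem_ring h𝒜 A hAmem ⟨i, hi⟩) (hAmem i) (hfibsub T i hi))
  -- ℬ fibers
  set D : Finset {l : Fin nsets // A l ∈ ℬ} → Set Ω :=
    fun σ => fibSet (fun j' : {l : Fin nsets // A l ∈ ℬ} => A j'.1) σ with hD
  set res : Finset (Fin nsets) → Finset {l : Fin nsets // A l ∈ ℬ} :=
    fun T => Finset.univ.filter (fun i' : {l : Fin nsets // A l ∈ ℬ} => i'.1 ∈ T) with hres
  have hμAB : ∀ i' : {l : Fin nsets // A l ∈ ℬ}, μ (A i'.1) =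
      ∑ σ ∈ Finset.univ.filter (fun σ : Finset {l : Fin nsets // A l ∈ ℬ} => i' ∈ σ), μ (D σ) :=
    fun i' => measure_set_eq_sum_fib hℬ μ hμ0 hBadd _ (fun j' => j'.2) i'
  have hpatres : ∀ ω : Ω, patFn (fun j' : {l : Fin nsets // A l ∈ ℬ} => A j'.1) ω
      = res (patFn A ω) := by
    intro ω
    ext i'
    rw [mem_pat_iff, hres]
    simp only [Finset.mem_filter, Finset.mem_univ, true_and]
    rw [mem_pat_iff]
  have hDsub : ∀ (σ : Finset {l : Fin nsets // A l ∈ ℬ}) (i' : {l : Fin nsets // A l ∈ ℬ}),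
      i' ∈ σ → D σ ⊆ A i'.1 :=
    fun σ i' hi' ω hω => ((mem_fib_iff _ σ ω).1 hω i').2 hi'
  have hDfin : ∀ σ : Finset {l : Fin nsets // A l ∈ ℬ}, σ.Nonempty → μ (D σ) ≠ ⊤ := by
    rintro σ ⟨i', hi'⟩
    exact ne_top_of_le_ne_top (hAfin i'.1).ne
      (measure_mono_ring h𝒜 μ hadd (hℬ𝒜 (fib_mem_ring hℬ _ (fun j' => j'.2) ⟨i', hi'⟩))
        (hAmem i'.1) (hDsub σ i' hi'))
  have hDmem : ∀ σ : Finset {l : Fin nsets // A l ∈ ℬ}, σ.Nonempty → D σ ∈ ℬ :=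
    fun σ hσ => fib_mem_ring hℬ _ (fun j' => j'.2) hσ
  have hfibD : ∀ (T : Finset (Fin nsets)) (σ : Finset {l : Fin nsets // A l ∈ ℬ}),
      res T = σ → fibSet A T ⊆ D σ := by
    intro T σ hTσ ω hω
    have hpa : patFn A ω = T := hω
    show patFn _ ω = σ
    rw [hpatres ω, hpa, hTσ]
  have hμD : ∀ σ : Finset {l : Fin nsets // A l ∈ ℬ}, σ.Nonempty →
      μ (D σ) = ∑ T ∈ Finset.univ.filter (fun T : Finset (Fin nsets) => res T = σ),
        μ (fibSet A T) := by
    intro σ hσ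
    have hset : D σ = ⋃ T ∈ Finset.univ.filter (fun T : Finset (Fin nsets) => res T = σ),
        fibSet A T := by
      ext ω
      simp only [Set.mem_iUnion, Finset.mem_filter, Finset.mem_univ, true_and]
      constructor
      · intro hω
        have hpB : patFn (fun j' : {l : Fin nsets // A l ∈ ℬ} => A j'.1) ω = σ := hω
        refine ⟨patFn A ω, ?_, rfl⟩
        rw [← hpatres ω]
        exact hpB
      · rintro ⟨T, hT, hfT⟩
        exact hfibD T σ hT hfT
    rw [hset]
    refine measure_biUnion_finset h𝒜 μ hμ0 hadd _ _ ?_ ?_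
    · intro T hT
      obtain ⟨i', hi'⟩ := hσ
      have : i'.1 ∈ T := by
        have := (Finset.mem_filter.1 hT).2
        rw [← this, hres] at hi'
        exact (Finset.mem_filter.1 hi').2
      exact fib_mem_ring h𝒜 A hAmem ⟨i'.1, this⟩
    · exact fun T _ T' _ hne => fib_disjoint A hne
  -- real values
  set w : Finset (Fin nsets) → ℝ := fun T => (μ (fibSet A T)).toReal with hw
  set vB : Finset {l : Fin nsets // A l ∈ ℬ} → ℝ := fun σ => (μ (D σ)).toReal with hvB
  set vA : Fin nsets → ℝ := fun i => (μ (A i)).toReal with hvA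
  have hwA : ∀ i : Fin nsets, vA i =
      ∑ T ∈ Finset.univ.filter (fun T : Finset (Fin nsets) => i ∈ T), w T := by
    intro i
    rw [hvA]
    simp only
    rw [hμA i, ENNReal.toReal_sum]
    intro T hT
    exact hfibfin T ⟨i, (Finset.mem_filter.1 hT).2⟩
  have hvBA : ∀ i' : {l : Fin nsets // A l ∈ ℬ}, vA i'.1 =
      ∑ σ ∈ Finset.univ.filter (fun σ : Finset {l : Fin nsets // A l ∈ ℬ} => i' ∈ σ), vB σ := by
    intro i'
    rw [hvA]
    simp only
    rw [hμAB i', ENNReal.toReal_sum]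
    intro σ hσ
    exact hDfin σ ⟨i', (Finset.mem_filter.1 hσ).2⟩
  -- forced points
  set X : Finset Ω := Finset.image x Finset.univ with hX
  set f : Finset (Fin nsets) → ℕ := fun T => (X.filter (fun ω => patFn A ω = T)).card with hf
  have hXk : X.card ≤ k := by
    calc X.card ≤ (Finset.univ : Finset (Fin k)).card := Finset.card_image_le
    _ = k := by simp
  have hfk : ∀ s : Finset (Finset (Fin nsets)), (∑ T ∈ s, f T) ≤ k := by
    intro s
    calc (∑ T ∈ s, f T) ≤ ∑ T ∈ (Finset.univ : Finset (Finset (Fin nsets))), f T :=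
          Finset.sum_le_sum_of_subset (Finset.subset_univ s)
    _ = X.card := by
          rw [Finset.card_eq_sum_card_fiberwise
            (f := patFn A) (t := Finset.univ) (fun ω _ => Finset.mem_univ _)]
    _ ≤ k := hXk
  set u : Finset {l : Fin nsets // A l ∈ ℬ} → ℕ := fun σ =>
    ∑ T ∈ Finset.univ.filter (fun T : Finset (Fin nsets) => res T = σ ∧ μ (fibSet A T) = 0),
      f T with hu
  have huk : ∀ σ, u σ ≤ k := fun σ => hfk _
  set Sreal : Finset (Finset {l : Fin nsets // A l ∈ ℬ}) :=
    Finset.univ.filter (fun σ => σ.Nonempty ∧ μ (D σ) ≠ 0) with hSreal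
  have hvBpos : ∀ σ ∈ Sreal, 0 < vB σ := by
    intro σ hσ
    obtain ⟨hne, hμσ⟩ := (Finset.mem_filter.1 hσ).2
    exact ENNReal.toReal_pos hμσ (hDfin σ hne)
  -- STEP A : compensation scale
  have hN1ex : ∃ N : ℕ, ∀ q : ℕ, N ≤ q → ∀ σ ∈ Sreal, (k + 2 : ℝ) ≤ (q : ℝ) * vB σ := by
    apply exists_forall_ge
    intro σ hσ
    obtain ⟨N, hN⟩ := exists_nat_gt ((k + 2 : ℝ) / vB σ)
    refine ⟨N, fun q hq => ?_⟩
    have h1 : ((k + 2 : ℝ) / vB σ) < (q : ℝ) := lt_of_lt_of_le hN (by exact_mod_cast hq)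
    rw [div_lt_iff₀ (hvBpos σ hσ)] at h1
    linarith [h1]
  obtain ⟨N₁, hN₁⟩ := hN1ex
  set P : ℕ := Fintype.card (Finset {l : Fin nsets // A l ∈ ℬ}) with hP
  set ε' : ℝ := 1 / (2 * P + 2) with hε'
  have hε'pos : 0 < ε' := by rw [hε']; positivity
  have hε'le : ε' ≤ 1 := by
    rw [hε']
    rw [div_le_one (by positivity)]
    have : (0:ℝ) ≤ (P:ℝ) := Nat.cast_nonneg _
    linarith
  have hε'lt : ε' < 1 := by
    rw [hε', div_lt_one (by positivity)]
    have : (0:ℝ) ≤ (P:ℝ) := Nat.cast_nonneg _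
    linarith
  have hPε' : 2 * (P : ℝ) * ε' < 1 := by
    have h2 : 2 * (P : ℝ) * ε' = 2 * (P : ℝ) / (2 * (P : ℝ) + 2) := by rw [hε']; ring
    rw [h2, div_lt_one (by positivity)]
    linarith
  obtain ⟨q', hq'N, hq'pos, ν', hν'⟩ := simultaneous_approx vB hε'pos N₁
  have hν'0 : ∀ σ, vB σ = 0 → ν' σ = 0 := by
    intro σ h0
    have := hν' σ
    rw [h0, mul_zero, zero_sub, abs_neg] at this
    have h1 : |(ν' σ : ℝ)| < 1 := lt_of_le_of_lt this hε'lt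
    have h2 : |ν' σ| < 1 := by rw [← Int.cast_abs] at h1; exact_mod_cast h1
    exact Int.abs_lt_one_iff.1 h2
  have hν'big : ∀ σ ∈ Sreal, (k + 1 : ℝ) ≤ (ν' σ : ℝ) := by
    intro σ hσ
    have h1 := hN₁ q' hq'N σ hσ
    have h2 := hν' σ
    rw [abs_le] at h2
    linarith [h2.2, hε'le]
  set ν : Finset {l : Fin nsets // A l ∈ ℬ} → ℕ := fun σ => (ν' σ).toNat with hν
  have hνcast : ∀ σ : Finset {l : Fin nsets // A l ∈ ℬ}, σ.Nonempty → ((ν σ : ℤ)) = ν' σ := by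
    intro σ hσ
    rw [hν]
    simp only
    by_cases hσS : σ ∈ Sreal
    · refine Int.toNat_of_nonneg ?_
      have := hν'big σ hσS
      have hk : (0 : ℝ) ≤ (k : ℝ) := Nat.cast_nonneg k
      have h0 : (0 : ℝ) ≤ (ν' σ : ℝ) := by linarith
      exact_mod_cast h0
    · have hμσ : μ (D σ) = 0 := by
        by_contra hne
        exact hσS (Finset.mem_filter.2 ⟨Finset.mem_univ _, hσ, hne⟩)
      have : vB σ = 0 := by rw [hvB]; simp only; rw [hμσ]; simp
      rw [hν'0 σ this]
      rfl
  have hν0 : ∀ σ : Finset {l : Fin nsets // A l ∈ ℬ}, σ.Nonempty → σ ∉ Sreal → ν σ = 0 := by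
    intro σ hσ hσS
    have hμσ : μ (D σ) = 0 := by
      by_contra hne
      exact hσS (Finset.mem_filter.2 ⟨Finset.mem_univ _, hσ, hne⟩)
    have hvb : vB σ = 0 := by rw [hvB]; simp only; rw [hμσ]; simp
    rw [hν]
    simp only
    rw [hν'0 σ hvb]
    rfl
  have hνbig : ∀ σ ∈ Sreal, k + 1 ≤ ν σ := by
    intro σ hσ
    have hne : σ.Nonempty := ((Finset.mem_filter.1 hσ).2).1
    have h1 := hν'big σ hσ
    have h2 : ((k + 1 : ℕ) : ℝ) ≤ ((ν σ : ℤ) : ℝ) := by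
      rw [hνcast σ hne]; push_cast; push_cast at h1; linarith
    exact_mod_cast h2
  have hνu : ∀ σ ∈ Sreal, u σ ≤ ν σ := fun σ hσ =>
    le_trans (le_trans (huk σ) (Nat.le_succ k)) (hνbig σ hσ)
  -- exactness at ℬ level
  have hBkey : ∀ l' : {l : Fin nsets // A l ∈ ℬ},
      |(∑ σ ∈ Finset.univ.filter (fun σ : Finset {l : Fin nsets // A l ∈ ℬ} => l' ∈ σ),
        ((ν' σ : ℝ))) - (q' : ℝ) * vA l'.1| ≤ (P : ℝ) * ε' := by
    intro l'
    rw [hvBA l', Finset.mul_sum, ← Finset.sum_sub_distrib]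
    calc |∑ σ ∈ Finset.univ.filter (fun σ : Finset {l : Fin nsets // A l ∈ ℬ} => l' ∈ σ),
        (((ν' σ : ℝ)) - (q' : ℝ) * vB σ)|
        ≤ ∑ σ ∈ Finset.univ.filter (fun σ : Finset {l : Fin nsets // A l ∈ ℬ} => l' ∈ σ),
          |((ν' σ : ℝ)) - (q' : ℝ) * vB σ| := Finset.abs_sum_le_sum_abs _ _
    _ ≤ ∑ _σ ∈ Finset.univ.filter (fun σ : Finset {l : Fin nsets // A l ∈ ℬ} => l' ∈ σ), ε' := by
        refine Finset.sum_le_sum fun σ _ => ?_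
        rw [abs_sub_comm]
        exact hν' σ
    _ = ((Finset.univ.filter (fun σ : Finset {l : Fin nsets // A l ∈ ℬ} => l' ∈ σ)).card : ℝ)
        * ε' := by rw [Finset.sum_const, nsmul_eq_mul]
    _ ≤ (P : ℝ) * ε' := by
        refine mul_le_mul_of_nonneg_right ?_ hε'pos.le
        have hle : (Finset.univ.filter
            (fun σ : Finset {l : Fin nsets // A l ∈ ℬ} => l' ∈ σ)).card ≤ P := by
          rw [hP, ← Finset.card_univ]
          exact Finset.card_filter_le _ _
        exact_mod_cast hle
  have hExact2 : ∀ i' j' : {l : Fin nsets // A l ∈ ℬ}, μ (A i'.1) = μ (A j'.1) →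
      (∑ σ ∈ Finset.univ.filter (fun σ : Finset {l : Fin nsets // A l ∈ ℬ} => i' ∈ σ), ν σ)
      = ∑ σ ∈ Finset.univ.filter (fun σ : Finset {l : Fin nsets // A l ∈ ℬ} => j' ∈ σ), ν σ := by
    intro i' j' hμeq
    have hveq : vA i'.1 = vA j'.1 := by rw [hvA]; simp only; rw [hμeq]
    have hi := hBkey i'
    have hj := hBkey j'
    rw [hveq] at hi
    have ca : ((∑ σ ∈ Finset.univ.filter
          (fun σ : Finset {l : Fin nsets // A l ∈ ℬ} => i' ∈ σ), ν σ : ℕ) : ℝ)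
        = ∑ σ ∈ Finset.univ.filter (fun σ : Finset {l : Fin nsets // A l ∈ ℬ} => i' ∈ σ),
          ((ν' σ : ℝ)) := by
      push_cast
      refine Finset.sum_congr rfl fun σ hσ => ?_
      have h := hνcast σ ⟨i', (Finset.mem_filter.1 hσ).2⟩
      exact_mod_cast h
    have cb : ((∑ σ ∈ Finset.univ.filter
          (fun σ : Finset {l : Fin nsets // A l ∈ ℬ} => j' ∈ σ), ν σ : ℕ) : ℝ)
        = ∑ σ ∈ Finset.univ.filter (fun σ : Finset {l : Fin nsets // A l ∈ ℬ} => j' ∈ σ),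
          ((ν' σ : ℝ)) := by
      push_cast
      refine Finset.sum_congr rfl fun σ hσ => ?_
      have h := hνcast σ ⟨j', (Finset.mem_filter.1 hσ).2⟩
      exact_mod_cast h
    refine nat_eq_of_abs_cast_lt_one ?_
    rw [ca, cb, abs_lt]
    rw [abs_le] at hi hj
    constructor <;> linarith [hi.1, hi.2, hj.1, hj.2, hPε']
  set B₀ : ℕ := (∑ σ ∈ Sreal, ν σ) + k with hB₀
  set C : ℝ := (B₀ : ℝ) + 1 with hC
  have hC1 : (1 : ℝ) ≤ C := by
    rw [hC]
    have : (0 : ℝ) ≤ (B₀ : ℝ) := Nat.cast_nonneg _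
    linarith
  -- STEP B : main scale
  set Pfin : Finset (Finset (Fin nsets)) :=
    Finset.univ.filter (fun T => T.Nonempty ∧ μ (fibSet A T) ≠ 0) with hPfin
  have hwpos : ∀ T ∈ Pfin, 0 < w T := by
    intro T hT
    obtain ⟨hne, hμT⟩ := (Finset.mem_filter.1 hT).2
    exact ENNReal.toReal_pos hμT (hfibfin T hne)
  have hNaex : ∃ N : ℕ, ∀ q : ℕ, N ≤ q → ∀ T ∈ Pfin, (k + 2 : ℝ) ≤ (q : ℝ) * w T := by
    apply exists_forall_ge
    intro T hT
    obtain ⟨N, hN⟩ := exists_nat_gt ((k + 2 : ℝ) / w T)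
    refine ⟨N, fun q hq => ?_⟩
    have h1 : ((k + 2 : ℝ) / w T) < (q : ℝ) := lt_of_lt_of_le hN (by exact_mod_cast hq)
    rw [div_lt_iff₀ (hwpos T hT)] at h1
    linarith [h1]
  obtain ⟨Na, hNa⟩ := hNaex
  have hNbex : ∃ N : ℕ, ∀ q : ℕ, N ≤ q →
      ∀ c ∈ Finset.univ.filter (fun c : Fin nsets × Fin nsets => μ (A c.2) ≠ 0),
        C * vA c.2 + (m : ℝ) * C * (vA c.1 + vA c.2) < (q : ℝ) * (vA c.2 * vA c.2) := by
    apply exists_forall_ge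
    intro c hc
    have hβ : 0 < vA c.2 :=
      ENNReal.toReal_pos ((Finset.mem_filter.1 hc).2) (hAfin c.2).ne
    obtain ⟨N, hN⟩ := exists_nat_gt ((C * vA c.2 + (m : ℝ) * C * (vA c.1 + vA c.2))
      / (vA c.2 * vA c.2))
    refine ⟨N, fun q hq => ?_⟩
    have h1 : (C * vA c.2 + (m : ℝ) * C * (vA c.1 + vA c.2)) / (vA c.2 * vA c.2) < (q : ℝ) :=
      lt_of_lt_of_le hN (by exact_mod_cast hq)
    rw [div_lt_iff₀ (by positivity)] at h1
    linarith [h1]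
  obtain ⟨Nb, hNb⟩ := hNbex
  set R : ℕ := Fintype.card (Finset (Fin nsets)) with hR
  set ε : ℝ := 1 / (2 * R + 2) with hεd
  have hεpos : 0 < ε := by rw [hεd]; positivity
  have hεle : ε ≤ 1 := by
    rw [hεd, div_le_one (by positivity)]
    have : (0:ℝ) ≤ (R:ℝ) := Nat.cast_nonneg _
    linarith
  have hεlt : ε < 1 := by
    rw [hεd, div_lt_one (by positivity)]
    have : (0:ℝ) ≤ (R:ℝ) := Nat.cast_nonneg _
    linarith
  have hRε : 2 * (R : ℝ) * ε < 1 := by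
    have h2 : 2 * (R : ℝ) * ε = 2 * (R : ℝ) / (2 * (R : ℝ) + 2) := by rw [hεd]; ring
    rw [h2, div_lt_one (by positivity)]
    linarith
  obtain ⟨q, hqN, hqpos, p', hp'⟩ := simultaneous_approx w hεpos (max Na Nb)
  have hqa : Na ≤ q := le_trans (le_max_left _ _) hqN
  have hqb : Nb ≤ q := le_trans (le_max_right _ _) hqN
  have hp'0 : ∀ T, μ (fibSet A T) = 0 → p' T = 0 := by
    intro T h0
    have hw0 : w T = 0 := by rw [hw]; simp only; rw [h0]; simp
    have := hp' T
    rw [hw0, mul_zero, zero_sub, abs_neg] at this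
    have h1 : |(p' T : ℝ)| < 1 := lt_of_le_of_lt this hεlt
    have h2 : |p' T| < 1 := by rw [← Int.cast_abs] at h1; exact_mod_cast h1
    exact Int.abs_lt_one_iff.1 h2
  have hp'big : ∀ T ∈ Pfin, (k + 1 : ℝ) ≤ (p' T : ℝ) := by
    intro T hT
    have h1 := hNa q hqa T hT
    have h2 := hp' T
    rw [abs_le] at h2
    linarith [h2.2, hεle]
  set p : Finset (Fin nsets) → ℕ := fun T => (p' T).toNat with hp
  have hpcast : ∀ T : Finset (Fin nsets), T.Nonempty → ((p T : ℤ)) = p' T := by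
    intro T hT
    rw [hp]
    simp only
    by_cases hTP : T ∈ Pfin
    · refine Int.toNat_of_nonneg ?_
      have := hp'big T hTP
      have hk : (0 : ℝ) ≤ (k : ℝ) := Nat.cast_nonneg k
      have h0 : (0 : ℝ) ≤ (p' T : ℝ) := by linarith
      exact_mod_cast h0
    · have hμT : μ (fibSet A T) = 0 := by
        by_contra hne
        exact hTP (Finset.mem_filter.2 ⟨Finset.mem_univ _, hT, hne⟩)
      rw [hp'0 T hμT]
      rfl
  have hp0 : ∀ T : Finset (Fin nsets), T.Nonempty → T ∉ Pfin → p T = 0 := by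
    intro T hT hTP
    have hμT : μ (fibSet A T) = 0 := by
      by_contra hne
      exact hTP (Finset.mem_filter.2 ⟨Finset.mem_univ _, hT, hne⟩)
    rw [hp]
    simp only
    rw [hp'0 T hμT]
    rfl
  have hpbig : ∀ T ∈ Pfin, k + 1 ≤ p T := by
    intro T hT
    have hne : T.Nonempty := ((Finset.mem_filter.1 hT).2).1
    have h1 := hp'big T hT
    have h2 : ((k + 1 : ℕ) : ℝ) ≤ ((p T : ℤ) : ℝ) := by
      rw [hpcast T hne]; push_cast; push_cast at h1; linarith
    exact_mod_cast h2
  -- choose a positive full fiber inside each realizable ℬ-fiber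
  have hTstar_ex : ∀ σ ∈ Sreal, ∃ T : Finset (Fin nsets), T ∈ Pfin ∧ res T = σ := by
    intro σ hσ
    obtain ⟨hne, hμσ⟩ := (Finset.mem_filter.1 hσ).2
    rw [hμD σ hne] at hμσ
    obtain ⟨T, hTmem, hTne⟩ := Finset.exists_ne_zero_of_sum_ne_zero hμσ
    have hresT : res T = σ := (Finset.mem_filter.1 hTmem).2
    obtain ⟨i', hi'⟩ := hne
    have hiT : i'.1 ∈ T := by
      rw [← hresT, hres] at hi'
      exact (Finset.mem_filter.1 hi').2
    exact ⟨T, Finset.mem_filter.2 ⟨Finset.mem_univ _, ⟨i'.1, hiT⟩, hTne⟩, hresT⟩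
  set Tst : Finset {l : Fin nsets // A l ∈ ℬ} → Finset (Fin nsets) :=
    fun σ => if h : σ ∈ Sreal then (hTstar_ex σ h).choose else ∅ with hTst
  have hTstP : ∀ σ ∈ Sreal, Tst σ ∈ Pfin ∧ res (Tst σ) = σ := by
    intro σ hσ
    rw [hTst]
    simp only
    rw [dif_pos hσ]
    exact (hTstar_ex σ hσ).choose_spec
  set r : Finset (Fin nsets) → ℕ :=
    fun T => ∑ σ ∈ Sreal.filter (fun σ => Tst σ = T), (ν σ - u σ) with hrdef
  -- choose the finite sets in each positive fiber
  have hSex : ∀ T ∈ Pfin, ∃ s : Finset Ω, ↑s ⊆ fibSet A T ∧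
      X.filter (fun ω => patFn A ω = T) ⊆ s ∧ s.card = p T + r T := by
    intro T hT
    obtain ⟨Tne, hTμ⟩ := (Finset.mem_filter.1 hT).2
    have hinf : (fibSet A T).Infinite := by
      by_contra hfin
      rw [Set.not_infinite] at hfin
      exact hTμ (hna _ (fib_mem_ring h𝒜 A hAmem Tne) hfin)
    have hbase : ↑(X.filter (fun ω => patFn A ω = T)) ⊆ fibSet A T := by
      intro ω hω
      rw [Finset.mem_coe, Finset.mem_filter] at hω
      exact hω.2
    have hXfin : (↑(X.filter (fun ω => patFn A ω = T)) : Set Ω).Finite :=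
      (X.filter _).finite_toSet
    have hcardle : (↑(X.filter (fun ω => patFn A ω = T)) : Set Ω).ncard ≤ p T + r T := by
      rw [Set.ncard_coe_finset]
      have h2 : f T ≤ k := by
        have := hfk {T}
        rwa [Finset.sum_singleton] at this
      have h3 : k + 1 ≤ p T := hpbig T hT
      have h4 : (X.filter (fun ω => patFn A ω = T)).card = f T := by rw [hf]
      omega
    obtain ⟨s', hs1, hs2, hs3⟩ := hinf.exists_superset_ncard_eq hbase hXfin hcardle
    have hs'fin : s'.Finite := by
      apply Set.finite_of_ncard_ne_zero
      rw [hs3]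
      have := hpbig T hT
      omega
    refine ⟨hs'fin.toFinset, ?_, ?_, ?_⟩
    · rw [Set.Finite.coe_toFinset]
      exact hs2
    · intro ω hω
      rw [Set.Finite.mem_toFinset]
      exact hs1 (Finset.mem_coe.2 hω)
    · rw [← hs3]
      exact (Set.ncard_eq_toFinset_card s' hs'fin).symm
  set S : Finset (Fin nsets) → Finset Ω :=
    fun T => if h : T ∈ Pfin then (hSex T h).choose else ∅ with hSdef
  have hSspec : ∀ T ∈ Pfin, ↑(S T) ⊆ fibSet A T ∧
      X.filter (fun ω => patFn A ω = T) ⊆ S T ∧ (S T).card = p T + r T := by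
    intro T hT
    rw [hSdef]
    simp only
    rw [dif_pos hT]
    exact (hSex T hT).choose_spec
  set lam : Finset Ω := X ∪ Pfin.biUnion S with hlam
  -- counting
  have hfilter_eq : ∀ T : Finset (Fin nsets), lam.filter (fun ω => patFn A ω = T)
      = if T ∈ Pfin then S T else X.filter (fun ω => patFn A ω = T) := by
    intro T
    ext ω
    by_cases hT : T ∈ Pfin
    · rw [if_pos hT]
      simp only [hlam, Finset.mem_filter, Finset.mem_union, Finset.mem_biUnion]
      constructor
      · rintro ⟨hmem, hpatω⟩
        rcases hmem with hXm | ⟨T', hT', hST'⟩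
        · exact (hSspec T hT).2.1 (Finset.mem_filter.2 ⟨hXm, hpatω⟩)
        · have hp2 : patFn A ω = T' := (hSspec T' hT').1 (Finset.mem_coe.2 hST')
          rw [hpatω] at hp2
          rwa [← hp2] at hST'
      · intro hω
        have hfib : patFn A ω = T := (hSspec T hT).1 (Finset.mem_coe.2 hω)
        exact ⟨Or.inr ⟨T, hT, hω⟩, hfib⟩
    · rw [if_neg hT]
      simp only [hlam, Finset.mem_filter, Finset.mem_union, Finset.mem_biUnion]
      constructor
      · rintro ⟨hmem, hpatω⟩
        rcases hmem with hXm | ⟨T', hT', hST'⟩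
        · exact ⟨hXm, hpatω⟩
        · have hp2 : patFn A ω = T' := (hSspec T' hT').1 (Finset.mem_coe.2 hST')
          rw [hpatω] at hp2
          exact absurd (hp2 ▸ hT') hT
      · rintro ⟨hXm, hpatω⟩
        exact ⟨Or.inl hXm, hpatω⟩
  have hcount : ∀ i : Fin nsets, ((↑lam ∩ A i : Set Ω).ncard)
      = (∑ T ∈ Finset.univ.filter (fun T : Finset (Fin nsets) => i ∈ T), p T)
        + ((∑ T ∈ (Finset.univ.filter (fun T : Finset (Fin nsets) => i ∈ T)).filter
              (fun T => T ∈ Pfin), r T)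
          + (∑ T ∈ (Finset.univ.filter (fun T : Finset (Fin nsets) => i ∈ T)).filter
              (fun T => T ∉ Pfin), f T)) := by
    intro i
    have h1 : (↑lam ∩ A i : Set Ω) = ↑(lam.filter (fun ω => ω ∈ A i)) := by
      ext ω
      simp only [Set.mem_inter_iff, Finset.coe_filter, Set.mem_setOf_eq, Finset.mem_coe]
    rw [h1, Set.ncard_coe_finset]
    have h2 : lam.filter (fun ω => ω ∈ A i) = lam.filter (fun ω => i ∈ patFn A ω) := by
      apply Finset.filter_congr
      intro ω _
      exact (mem_pat_iff A ω i).symm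
    rw [h2]
    rw [Finset.card_eq_sum_card_fiberwise (f := patFn A)
      (s := lam.filter (fun ω => i ∈ patFn A ω))
      (t := Finset.univ.filter (fun T : Finset (Fin nsets) => i ∈ T))
      (fun ω hω => Finset.mem_filter.2 ⟨Finset.mem_univ _, (Finset.mem_filter.1 hω).2⟩)]
    have h3 : ∀ T ∈ Finset.univ.filter (fun T : Finset (Fin nsets) => i ∈ T),
        ((lam.filter (fun ω => i ∈ patFn A ω)).filter (fun ω => patFn A ω = T)).card
        = if T ∈ Pfin then p T + r T else f T := by
      intro T hT
      have hiT := (Finset.mem_filter.1 hT).2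
      have h4 : (lam.filter (fun ω => i ∈ patFn A ω)).filter (fun ω => patFn A ω = T)
          = lam.filter (fun ω => patFn A ω = T) := by
        ext ω
        simp only [Finset.mem_filter]
        constructor
        · rintro ⟨⟨hl, _⟩, hp5⟩
          exact ⟨hl, hp5⟩
        · rintro ⟨hl, hp5⟩
          exact ⟨⟨hl, by rw [hp5]; exact hiT⟩, hp5⟩
      rw [h4, hfilter_eq T]
      split_ifs with hTP
      · exact (hSspec T hTP).2.2
      · rw [hf]
    rw [Finset.sum_congr rfl h3]
    rw [← Finset.sum_filter_add_sum_filter_not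
      (Finset.univ.filter (fun T : Finset (Fin nsets) => i ∈ T)) (fun T => T ∈ Pfin)]
    have e1 : ∑ T ∈ (Finset.univ.filter (fun T : Finset (Fin nsets) => i ∈ T)).filter
        (fun T => T ∈ Pfin), (if T ∈ Pfin then p T + r T else f T)
        = ∑ T ∈ (Finset.univ.filter (fun T : Finset (Fin nsets) => i ∈ T)).filter
          (fun T => T ∈ Pfin), (p T + r T) :=
      Finset.sum_congr rfl fun T hT => if_pos (Finset.mem_filter.1 hT).2
    have e2 : ∑ T ∈ (Finset.univ.filter (fun T : Finset (Fin nsets) => i ∈ T)).filter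
        (fun T => T ∉ Pfin), (if T ∈ Pfin then p T + r T else f T)
        = ∑ T ∈ (Finset.univ.filter (fun T : Finset (Fin nsets) => i ∈ T)).filter
          (fun T => T ∉ Pfin), f T :=
      Finset.sum_congr rfl fun T hT => if_neg (Finset.mem_filter.1 hT).2
    rw [e1, e2, Finset.sum_add_distrib]
    have e3 : ∑ T ∈ Finset.univ.filter (fun T : Finset (Fin nsets) => i ∈ T), p T
        = (∑ T ∈ (Finset.univ.filter (fun T : Finset (Fin nsets) => i ∈ T)).filter
            (fun T => T ∈ Pfin), p T)
          + ∑ T ∈ (Finset.univ.filter (fun T : Finset (Fin nsets) => i ∈ T)).filter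
            (fun T => T ∉ Pfin), p T :=
      (Finset.sum_filter_add_sum_filter_not _ _ _).symm
    have e4 : ∑ T ∈ (Finset.univ.filter (fun T : Finset (Fin nsets) => i ∈ T)).filter
        (fun T => T ∉ Pfin), p T = 0 := by
      refine Finset.sum_eq_zero fun T hT => ?_
      obtain ⟨hTi, hTP⟩ := Finset.mem_filter.1 hT
      exact hp0 T ⟨i, (Finset.mem_filter.1 hTi).2⟩ hTP
    omega
  have hcountB : ∀ (i : Fin nsets) (hi : A i ∈ ℬ),
      ((∑ T ∈ (Finset.univ.filter (fun T : Finset (Fin nsets) => i ∈ T)).filter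
          (fun T => T ∈ Pfin), r T)
        + (∑ T ∈ (Finset.univ.filter (fun T : Finset (Fin nsets) => i ∈ T)).filter
            (fun T => T ∉ Pfin), f T))
      = ∑ σ ∈ Finset.univ.filter
          (fun σ : Finset {l : Fin nsets // A l ∈ ℬ} => (⟨i, hi⟩ : {l // A l ∈ ℬ}) ∈ σ), ν σ := by
    intro i hi
    have hmaps0 : ∀ σ ∈ Sreal.filter
        (fun σ : Finset {l : Fin nsets // A l ∈ ℬ} => (⟨i, hi⟩ : {l // A l ∈ ℬ}) ∈ σ),
        Tst σ ∈ (Finset.univ.filter (fun T : Finset (Fin nsets) => i ∈ T)).filter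
          (fun T => T ∈ Pfin) := by
      intro σ hσ
      obtain ⟨hσS, hiσ⟩ := Finset.mem_filter.1 hσ
      obtain ⟨hTP, hresσ⟩ := hTstP σ hσS
      refine Finset.mem_filter.2 ⟨Finset.mem_filter.2 ⟨Finset.mem_univ _, ?_⟩, hTP⟩
      have hmem : (⟨i, hi⟩ : {l // A l ∈ ℬ}) ∈ res (Tst σ) := by rw [hresσ]; exact hiσ
      rw [hres] at hmem
      exact (Finset.mem_filter.1 hmem).2
    have h1 : (∑ T ∈ (Finset.univ.filter (fun T : Finset (Fin nsets) => i ∈ T)).filter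
        (fun T => T ∈ Pfin), r T)
        = ∑ σ ∈ Sreal.filter
          (fun σ : Finset {l : Fin nsets // A l ∈ ℬ} => (⟨i, hi⟩ : {l // A l ∈ ℬ}) ∈ σ),
          (ν σ - u σ) := by
      rw [← Finset.sum_fiberwise_of_maps_to hmaps0 (fun σ => ν σ - u σ)]
      refine Finset.sum_congr rfl fun T hT => ?_
      simp only [hrdef]
      have hiT : i ∈ T := (Finset.mem_filter.1 (Finset.mem_filter.1 hT).1).2
      have hsets : Sreal.filter (fun σ => Tst σ = T)
          = Sreal.filter (fun σ => (⟨i, hi⟩ : {l // A l ∈ ℬ}) ∈ σ ∧ Tst σ = T) := by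
        refine Finset.filter_congr fun σ hσS => ?_
        constructor
        · intro hTeq
          have hresσ := (hTstP σ hσS).2
          rw [hTeq] at hresσ
          refine ⟨?_, hTeq⟩
          rw [← hresσ, hres]
          exact Finset.mem_filter.2 ⟨Finset.mem_univ _, hiT⟩
        · rintro ⟨_, hTeq⟩
          exact hTeq
      conv_rhs => rw [Finset.filter_filter]
      rw [hsets]
    have hset : (Finset.univ.filter (fun T : Finset (Fin nsets) => i ∈ T)).filter
        (fun T => T ∉ Pfin)
        = Finset.univ.filter (fun T : Finset (Fin nsets) => i ∈ T ∧ μ (fibSet A T) = 0) := by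
      ext T
      simp only [Finset.mem_filter, Finset.mem_univ, true_and]
      constructor
      · rintro ⟨hiT, hTP⟩
        refine ⟨hiT, ?_⟩
        by_contra hμne
        refine hTP ?_
        rw [hPfin]
        exact Finset.mem_filter.2 ⟨Finset.mem_univ _, ⟨i, hiT⟩, hμne⟩
      · rintro ⟨hiT, hμ0'⟩
        refine ⟨hiT, fun hTP' => ?_⟩
        rw [hPfin] at hTP'
        exact (Finset.mem_filter.1 hTP').2.2 hμ0'
    have hmaps1 : ∀ T ∈ Finset.univ.filter
        (fun T : Finset (Fin nsets) => i ∈ T ∧ μ (fibSet A T) = 0),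
        res T ∈ Finset.univ.filter
          (fun σ : Finset {l : Fin nsets // A l ∈ ℬ} => (⟨i, hi⟩ : {l // A l ∈ ℬ}) ∈ σ) := by
      intro T hT
      have hiT := (Finset.mem_filter.1 hT).2.1
      refine Finset.mem_filter.2 ⟨Finset.mem_univ _, ?_⟩
      rw [hres]
      exact Finset.mem_filter.2 ⟨Finset.mem_univ _, hiT⟩
    have h2 : (∑ T ∈ (Finset.univ.filter (fun T : Finset (Fin nsets) => i ∈ T)).filter
        (fun T => T ∉ Pfin), f T)
        = ∑ σ ∈ Finset.univ.filter
          (fun σ : Finset {l : Fin nsets // A l ∈ ℬ} => (⟨i, hi⟩ : {l // A l ∈ ℬ}) ∈ σ), u σ := by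
      rw [hset, ← Finset.sum_fiberwise_of_maps_to hmaps1 f]
      refine Finset.sum_congr rfl fun σ hσ => ?_
      simp only [hu]
      congr 1
      ext T
      simp only [Finset.mem_filter, Finset.mem_univ, true_and]
      constructor
      · rintro ⟨⟨hiT, hμ0'⟩, hresT⟩
        exact ⟨hresT, hμ0'⟩
      · rintro ⟨hresT, hμ0'⟩
        refine ⟨⟨?_, hμ0'⟩, hresT⟩
        have hiσ := (Finset.mem_filter.1 hσ).2
        rw [← hresT, hres] at hiσ
        exact (Finset.mem_filter.1 hiσ).2
    have huzero : ∀ σ ∈ (Finset.univ.filter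
        (fun σ : Finset {l : Fin nsets // A l ∈ ℬ} => (⟨i, hi⟩ : {l // A l ∈ ℬ}) ∈ σ)).filter
        (fun σ => σ ∉ Sreal), u σ = 0 := by
      intro σ hσ
      obtain ⟨hσi, hσS⟩ := Finset.mem_filter.1 hσ
      have hiσ := (Finset.mem_filter.1 hσi).2
      have hne : σ.Nonempty := ⟨_, hiσ⟩
      have hμσ : μ (D σ) = 0 := by
        by_contra hne2
        refine hσS ?_
        rw [hSreal]
        exact Finset.mem_filter.2 ⟨Finset.mem_univ _, hne, hne2⟩
      have hDempty : D σ = ∅ := by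
        by_contra hne3
        obtain ⟨hpos, _⟩ := hℬpos (D σ) (hDmem σ hne) (Set.nonempty_iff_ne_empty.2 hne3)
        exact absurd hμσ hpos.ne'
      simp only [hu]
      refine Finset.sum_eq_zero fun T hT => ?_
      have hresT : res T = σ := ((Finset.mem_filter.1 hT).2).1
      simp only [hf]
      rw [Finset.card_eq_zero, Finset.filter_eq_empty_iff]
      intro ω _ hpat
      have hmem : ω ∈ D σ := hfibD T σ hresT hpat
      rw [hDempty] at hmem
      exact hmem
    have hνzero : ∀ σ ∈ (Finset.univ.filter
        (fun σ : Finset {l : Fin nsets // A l ∈ ℬ} => (⟨i, hi⟩ : {l // A l ∈ ℬ}) ∈ σ)).filter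
        (fun σ => σ ∉ Sreal), ν σ = 0 := by
      intro σ hσ
      obtain ⟨hσi, hσS⟩ := Finset.mem_filter.1 hσ
      exact hν0 σ ⟨_, (Finset.mem_filter.1 hσi).2⟩ hσS
    rw [h1, h2]
    have hsplitu : (∑ σ ∈ Finset.univ.filter
        (fun σ : Finset {l : Fin nsets // A l ∈ ℬ} => (⟨i, hi⟩ : {l // A l ∈ ℬ}) ∈ σ), u σ)
        = (∑ σ ∈ (Finset.univ.filter
            (fun σ : Finset {l : Fin nsets // A l ∈ ℬ} =>
              (⟨i, hi⟩ : {l // A l ∈ ℬ}) ∈ σ)).filter (fun σ => σ ∈ Sreal), u σ)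
          + ∑ σ ∈ (Finset.univ.filter
            (fun σ : Finset {l : Fin nsets // A l ∈ ℬ} =>
              (⟨i, hi⟩ : {l // A l ∈ ℬ}) ∈ σ)).filter (fun σ => σ ∉ Sreal), u σ :=
      (Finset.sum_filter_add_sum_filter_not _ _ _).symm
    have hsplitν : (∑ σ ∈ Finset.univ.filter
        (fun σ : Finset {l : Fin nsets // A l ∈ ℬ} => (⟨i, hi⟩ : {l // A l ∈ ℬ}) ∈ σ), ν σ)
        = (∑ σ ∈ (Finset.univ.filter
            (fun σ : Finset {l : Fin nsets // A l ∈ ℬ} =>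
              (⟨i, hi⟩ : {l // A l ∈ ℬ}) ∈ σ)).filter (fun σ => σ ∈ Sreal), ν σ)
          + ∑ σ ∈ (Finset.univ.filter
            (fun σ : Finset {l : Fin nsets // A l ∈ ℬ} =>
              (⟨i, hi⟩ : {l // A l ∈ ℬ}) ∈ σ)).filter (fun σ => σ ∉ Sreal), ν σ :=
      (Finset.sum_filter_add_sum_filter_not _ _ _).symm
    have hz1 := Finset.sum_eq_zero huzero
    have hz2 := Finset.sum_eq_zero hνzero
    have hfilterswap : Sreal.filter
        (fun σ : Finset {l : Fin nsets // A l ∈ ℬ} => (⟨i, hi⟩ : {l // A l ∈ ℬ}) ∈ σ)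
        = (Finset.univ.filter
            (fun σ : Finset {l : Fin nsets // A l ∈ ℬ} =>
              (⟨i, hi⟩ : {l // A l ∈ ℬ}) ∈ σ)).filter (fun σ => σ ∈ Sreal) := by
      ext σ
      simp only [Finset.mem_filter, Finset.mem_univ, true_and]
      tauto
    have hmaineq : (∑ σ ∈ (Finset.univ.filter
          (fun σ : Finset {l : Fin nsets // A l ∈ ℬ} =>
            (⟨i, hi⟩ : {l // A l ∈ ℬ}) ∈ σ)).filter (fun σ => σ ∈ Sreal), (ν σ - u σ))
        + (∑ σ ∈ (Finset.univ.filter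
            (fun σ : Finset {l : Fin nsets // A l ∈ ℬ} =>
              (⟨i, hi⟩ : {l // A l ∈ ℬ}) ∈ σ)).filter (fun σ => σ ∈ Sreal), u σ)
        = ∑ σ ∈ (Finset.univ.filter
            (fun σ : Finset {l : Fin nsets // A l ∈ ℬ} =>
              (⟨i, hi⟩ : {l // A l ∈ ℬ}) ∈ σ)).filter (fun σ => σ ∈ Sreal), ν σ := by
      rw [← Finset.sum_add_distrib]
      refine Finset.sum_congr rfl fun σ hσ => ?_
      exact Nat.sub_add_cancel (hνu σ (Finset.mem_filter.1 hσ).2)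
    rw [hfilterswap]
    omega
  have hExtLe : ∀ i : Fin nsets,
      ((∑ T ∈ (Finset.univ.filter (fun T : Finset (Fin nsets) => i ∈ T)).filter
          (fun T => T ∈ Pfin), r T)
        + (∑ T ∈ (Finset.univ.filter (fun T : Finset (Fin nsets) => i ∈ T)).filter
            (fun T => T ∉ Pfin), f T)) ≤ B₀ := by
    intro i
    have h1 : (∑ T ∈ (Finset.univ.filter (fun T : Finset (Fin nsets) => i ∈ T)).filter
        (fun T => T ∈ Pfin), r T) ≤ ∑ T ∈ Pfin, r T := by
      refine Finset.sum_le_sum_of_subset ?_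
      intro T hT
      exact (Finset.mem_filter.1 hT).2
    have h2 : (∑ T ∈ Pfin, r T) = ∑ σ ∈ Sreal, (ν σ - u σ) := by
      rw [← Finset.sum_fiberwise_of_maps_to (g := Tst) (t := Pfin)
        (fun σ hσ => (hTstP σ hσ).1) (fun σ => ν σ - u σ)]
    have h3 : (∑ σ ∈ Sreal, (ν σ - u σ)) ≤ ∑ σ ∈ Sreal, ν σ :=
      Finset.sum_le_sum fun σ _ => Nat.sub_le _ _
    have h4 : (∑ T ∈ (Finset.univ.filter (fun T : Finset (Fin nsets) => i ∈ T)).filter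
        (fun T => T ∉ Pfin), f T) ≤ k := hfk _
    have hB : B₀ = (∑ σ ∈ Sreal, ν σ) + k := hB₀
    omega
  have hmain : ∀ i : Fin nsets,
      |(∑ T ∈ Finset.univ.filter (fun T : Finset (Fin nsets) => i ∈ T), ((p T : ℝ)))
        - (q : ℝ) * vA i| ≤ (R : ℝ) * ε := by
    intro i
    have hcast : (∑ T ∈ Finset.univ.filter (fun T : Finset (Fin nsets) => i ∈ T), ((p T : ℝ)))
        = ∑ T ∈ Finset.univ.filter (fun T : Finset (Fin nsets) => i ∈ T), ((p' T : ℝ)) := by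
      refine Finset.sum_congr rfl fun T hT => ?_
      have h := hpcast T ⟨i, (Finset.mem_filter.1 hT).2⟩
      exact_mod_cast h
    rw [hcast, hwA i, Finset.mul_sum, ← Finset.sum_sub_distrib]
    calc |∑ T ∈ Finset.univ.filter (fun T : Finset (Fin nsets) => i ∈ T),
        (((p' T : ℝ)) - (q : ℝ) * w T)|
        ≤ ∑ T ∈ Finset.univ.filter (fun T : Finset (Fin nsets) => i ∈ T),
          |((p' T : ℝ)) - (q : ℝ) * w T| := Finset.abs_sum_le_sum_abs _ _
    _ ≤ ∑ _T ∈ Finset.univ.filter (fun T : Finset (Fin nsets) => i ∈ T), ε := by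
        refine Finset.sum_le_sum fun T _ => ?_
        rw [abs_sub_comm]
        exact hp' T
    _ = ((Finset.univ.filter (fun T : Finset (Fin nsets) => i ∈ T)).card : ℝ) * ε := by
        rw [Finset.sum_const, nsmul_eq_mul]
    _ ≤ (R : ℝ) * ε := by
        refine mul_le_mul_of_nonneg_right ?_ hεpos.le
        have hle : (Finset.univ.filter (fun T : Finset (Fin nsets) => i ∈ T)).card ≤ R := by
          rw [hR, ← Finset.card_univ]
          exact Finset.card_filter_le _ _
        exact_mod_cast hle
  have happrox : ∀ i : Fin nsets, |(((↑lam ∩ A i : Set Ω).ncard : ℝ)) - (q : ℝ) * vA i| ≤ C := by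
    intro i
    have h1 := hmain i
    have h2 := hExtLe i
    have hRε2 : (R : ℝ) * ε ≤ 1 / 2 := by linarith [hRε]
    have h2' : (((∑ T ∈ (Finset.univ.filter (fun T : Finset (Fin nsets) => i ∈ T)).filter
          (fun T => T ∈ Pfin), r T)
        + (∑ T ∈ (Finset.univ.filter (fun T : Finset (Fin nsets) => i ∈ T)).filter
            (fun T => T ∉ Pfin), f T) : ℕ) : ℝ) ≤ (B₀ : ℝ) := by exact_mod_cast h2
    have h0' : (0 : ℝ) ≤ (((∑ T ∈ (Finset.univ.filter
          (fun T : Finset (Fin nsets) => i ∈ T)).filter (fun T => T ∈ Pfin), r T)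
        + (∑ T ∈ (Finset.univ.filter (fun T : Finset (Fin nsets) => i ∈ T)).filter
            (fun T => T ∉ Pfin), f T) : ℕ) : ℝ) := Nat.cast_nonneg _
    rw [hcount i, Nat.cast_add]
    have hcastsum : ((∑ T ∈ Finset.univ.filter (fun T : Finset (Fin nsets) => i ∈ T), p T
        : ℕ) : ℝ)
        = ∑ T ∈ Finset.univ.filter (fun T : Finset (Fin nsets) => i ∈ T), ((p T : ℝ)) :=
      Nat.cast_sum _ _
    rw [hcastsum]
    rw [abs_le] at h1 ⊢
    have hCd : C = (B₀ : ℝ) + 1 := hC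
    constructor <;> linarith [h1.1, h1.2, h2', h0']
  -- conclusion
  refine ⟨↑lam, lam.finite_toSet, ?_, ?_, ?_⟩
  · intro i
    rw [Finset.mem_coe, hlam]
    exact Finset.mem_union_left _ (Finset.mem_image.2 ⟨i, Finset.mem_univ i, rfl⟩)
  · intro i j hi hj hμeq
    have hveq : vA i = vA j := by rw [hvA]; simp only; rw [hμeq]
    have e1 : (∑ T ∈ Finset.univ.filter (fun T : Finset (Fin nsets) => i ∈ T), p T)
        = ∑ T ∈ Finset.univ.filter (fun T : Finset (Fin nsets) => j ∈ T), p T := by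
      have h1 := hmain i
      have h2 := hmain j
      rw [hveq] at h1
      refine nat_eq_of_abs_cast_lt_one ?_
      have ci : ((∑ T ∈ Finset.univ.filter (fun T : Finset (Fin nsets) => i ∈ T), p T
          : ℕ) : ℝ) = ∑ T ∈ Finset.univ.filter (fun T : Finset (Fin nsets) => i ∈ T),
          ((p T : ℝ)) := Nat.cast_sum _ _
      have cj : ((∑ T ∈ Finset.univ.filter (fun T : Finset (Fin nsets) => j ∈ T), p T
          : ℕ) : ℝ) = ∑ T ∈ Finset.univ.filter (fun T : Finset (Fin nsets) => j ∈ T),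
          ((p T : ℝ)) := Nat.cast_sum _ _
      rw [ci, cj, abs_lt]
      rw [abs_le] at h1 h2
      constructor <;> linarith [h1.1, h1.2, h2.1, h2.2, hRε]
    have e2 := hExact2 ⟨i, hi⟩ ⟨j, hj⟩ hμeq
    rw [hcount i, hcount j, hcountB i hi, hcountB j hj, e1, e2]
  · intro j hμj
    have hβ : 0 < vA j := by
      rw [hvA]
      exact ENNReal.toReal_pos hμj (hAfin j).ne
    have hm1 : (1 : ℝ) ≤ (m : ℝ) := by exact_mod_cast hm
    have hmpos : (0 : ℝ) < (m : ℝ) := by linarith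
    have hpair : ∀ i : Fin nsets,
        C * vA j + (m : ℝ) * C * (vA i + vA j) < (q : ℝ) * (vA j * vA j) := by
      intro i
      exact hNb q hqb (i, j) (Finset.mem_filter.2 ⟨Finset.mem_univ _, hμj⟩)
    have hqC : C < (q : ℝ) * vA j := by
      have h := hpair j
      have hnn : 0 ≤ (m : ℝ) * C * (vA j + vA j) :=
        mul_nonneg (mul_nonneg hmpos.le (le_trans zero_le_one hC1)) (by linarith)
      have h2 : C * vA j < ((q : ℝ) * vA j) * vA j := by
        have hre : (q : ℝ) * (vA j * vA j) = ((q : ℝ) * vA j) * vA j := by ring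
        linarith [hre]
      exact lt_of_mul_lt_mul_right h2 hβ.le
    have hbj := happrox j
    rw [abs_le] at hbj
    have hb0 : (0 : ℝ) < (((↑lam ∩ A j : Set Ω).ncard : ℕ) : ℝ) := by linarith [hbj.1]
    have hbpos : 0 < (↑lam ∩ A j : Set Ω).ncard := by exact_mod_cast hb0
    refine ⟨hbpos, fun i => ?_⟩
    have hai := happrox i
    rw [abs_le] at hai
    have hα : 0 ≤ vA i := by
      rw [hvA]
      exact ENNReal.toReal_nonneg
    have hbβ : (0 : ℝ) < (((↑lam ∩ A j : Set Ω).ncard : ℕ) : ℝ) * vA j := mul_pos hb0 hβ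
    have hnum : |(((↑lam ∩ A i : Set Ω).ncard : ℕ) : ℝ) * vA j
        - (((↑lam ∩ A j : Set Ω).ncard : ℕ) : ℝ) * vA i| ≤ C * (vA i + vA j) := by
      have h2 : (((↑lam ∩ A i : Set Ω).ncard : ℕ) : ℝ) * vA j
          - (((↑lam ∩ A j : Set Ω).ncard : ℕ) : ℝ) * vA i
          = ((((↑lam ∩ A i : Set Ω).ncard : ℕ) : ℝ) - (q : ℝ) * vA i) * vA j
            - ((((↑lam ∩ A j : Set Ω).ncard : ℕ) : ℝ) - (q : ℝ) * vA j) * vA i := by ring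
      rw [h2, sub_eq_add_neg]
      refine (abs_add_le _ _).trans ?_
      rw [abs_neg, abs_mul, abs_mul, abs_of_pos hβ, abs_of_nonneg hα]
      have b1 : |(((↑lam ∩ A i : Set Ω).ncard : ℕ) : ℝ) - (q : ℝ) * vA i| * vA j ≤ C * vA j :=
        mul_le_mul_of_nonneg_right (happrox i) hβ.le
      have b2 : |(((↑lam ∩ A j : Set Ω).ncard : ℕ) : ℝ) - (q : ℝ) * vA j| * vA i ≤ C * vA i :=
        mul_le_mul_of_nonneg_right (happrox j) hα
      have hre : C * vA j + C * vA i = C * (vA i + vA j) := by ring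
      linarith [b1, b2, hre]
    have hbb : (q : ℝ) * (vA j * vA j) - C * vA j
        ≤ (((↑lam ∩ A j : Set Ω).ncard : ℕ) : ℝ) * vA j := by
      have h3 : (q : ℝ) * vA j - C ≤ (((↑lam ∩ A j : Set Ω).ncard : ℕ) : ℝ) := by
        linarith [hbj.1]
      have h4 := mul_le_mul_of_nonneg_right h3 hβ.le
      have h5 : ((q : ℝ) * vA j - C) * vA j = (q : ℝ) * (vA j * vA j) - C * vA j := by ring
      rw [h5] at h4
      exact h4
    have hfinal : (m : ℝ) * |(((↑lam ∩ A i : Set Ω).ncard : ℕ) : ℝ) * vA j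
        - (((↑lam ∩ A j : Set Ω).ncard : ℕ) : ℝ) * vA i|
        < (((↑lam ∩ A j : Set Ω).ncard : ℕ) : ℝ) * vA j := by
      have s1 : (m : ℝ) * |(((↑lam ∩ A i : Set Ω).ncard : ℕ) : ℝ) * vA j
          - (((↑lam ∩ A j : Set Ω).ncard : ℕ) : ℝ) * vA i|
          ≤ (m : ℝ) * (C * (vA i + vA j)) := mul_le_mul_of_nonneg_left hnum hmpos.le
      have hassoc : (m : ℝ) * (C * (vA i + vA j)) = (m : ℝ) * C * (vA i + vA j) := by ring
      linarith [s1, hpair i, hbb, hassoc]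
    have hdiv : (((↑lam ∩ A i : Set Ω).ncard : ℕ) : ℝ) / (((↑lam ∩ A j : Set Ω).ncard : ℕ) : ℝ)
        - vA i / vA j
        = ((((↑lam ∩ A i : Set Ω).ncard : ℕ) : ℝ) * vA j
          - (((↑lam ∩ A j : Set Ω).ncard : ℕ) : ℝ) * vA i)
          / ((((↑lam ∩ A j : Set Ω).ncard : ℕ) : ℝ) * vA j) := by
      field_simp
    rw [hdiv, abs_div, abs_of_pos hbβ, div_lt_div_iff₀ hbβ hmpos]
    linarith [hfinal]
end

section
/- Let A be a ring of subsets of Ω, let μ : A → [0,+∞) be a non-atomic pre-measure whose induced outer measure μ̄ satisfies μ̄(Ω) < +∞, let C_μ be the Caratheodory σ-algebra of μ̄, and let ν : P(Ω) → [0,+∞) be a finitely additive measure defined on all subsets of Ω such that ν(C) = μ̄(C) for every C ∈ C_μ and ν(X) ≤ μ̄(X) for every X ⊆ Ω. Then the following three statements are equivalent: (1) for every X ∉ C_μ, both ν(X) < μ̄(X) and ν(Xᶜ) < μ̄(Xᶜ); (2) for every X ⊆ Ω, ν(X) = μ̄(X) if and only if ν(Xᶜ) = μ̄(Xᶜ);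 (3) for every X ⊆ Ω, ν(X) = 0 if and only if μ̄(X) = 0. -/
open scoped ENNReal

/-- The outer measure induced by μ : 𝒜 → [0,+∞]: the infimum of Σₙ μ(Aₙ) over all
countable covers of X by sets of 𝒜 (the infimum of the empty family being +∞). -/
noncomputable def outerOf {Ω : Type*} (𝒜 : Set (Set Ω)) (μ : Set Ω → ℝ≥0∞) (X : Set Ω) :
    ℝ≥0∞ :=
  ⨅ (f : ℕ → Set Ω) (_ : ∀ i, f i ∈ 𝒜) (_ : X ⊆ ⋃ i, f i), ∑' i, μ (f i)

/-- The Caratheodory σ-algebra associated to the outer measure induced by μ. -/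
def carathOf {Ω : Type*} (𝒜 : Set (Set Ω)) (μ : Set Ω → ℝ≥0∞) : Set (Set Ω) :=
  {X | ∀ Y : Set Ω, outerOf 𝒜 μ Y = outerOf 𝒜 μ (Y ∩ X) + outerOf 𝒜 μ (Y \ X)}


open scoped ENNReal
open MeasureTheory Set

namespace Stmt5Aux

variable {Ω : Type*} {𝒜 : Set (Set Ω)} {μ : Set Ω → ℝ≥0∞}

lemma empty_mem (h𝒜 : IsRingOfSets 𝒜) : (∅ : Set Ω) ∈ 𝒜 := by
  obtain ⟨A, hA⟩ := h𝒜.nonempty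
  simpa using h𝒜.diff_mem A hA A hA

lemma outerOf_le_tsum {g : ℕ → Set Ω} {X : Set Ω} (hg : ∀ i, g i ∈ 𝒜)
    (hX : X ⊆ ⋃ i, g i) : outerOf 𝒜 μ X ≤ ∑' i, μ (g i) :=
  iInf_le_of_le g (iInf_le_of_le hg (iInf_le_of_le hX le_rfl))

lemma outerOf_empty (hemp : (∅ : Set Ω) ∈ 𝒜) (hμ0 : μ ∅ = 0) : outerOf 𝒜 μ ∅ = 0 := by
  refine le_antisymm ?_ zero_le
  have := outerOf_le_tsum (μ := μ) (g := fun _ : ℕ => (∅ : Set Ω)) (X := ∅)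
    (fun _ => hemp) (by simp)
  simpa [hμ0] using this

open scoped Classical in
noncomputable def mExt (𝒜 : Set (Set Ω)) (μ : Set Ω → ℝ≥0∞) : Set Ω → ℝ≥0∞ :=
  fun A => if A ∈ 𝒜 then μ A else ⊤

lemma exists_outer (hemp : (∅ : Set Ω) ∈ 𝒜) (hμ0 : μ ∅ = 0) :
    ∃ O : OuterMeasure Ω, ⇑O = outerOf 𝒜 μ := by
  classical
  have hm0 : mExt 𝒜 μ ∅ = 0 := by simp [mExt, hemp, hμ0]
  refine ⟨OuterMeasure.ofFunction (mExt 𝒜 μ) hm0, ?_⟩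
  funext s
  rw [OuterMeasure.ofFunction_eq_iInf_mem (mExt 𝒜 μ) hm0 (P := fun A => A ∈ 𝒜)
    (fun A hA => if_neg hA)]
  exact iInf_congr fun f => iInf_congr fun hf => iInf_congr fun _ =>
    tsum_congr fun i => if_pos (hf i)


lemma outerOf_mono {X Y : Set Ω} (h : X ⊆ Y) : outerOf 𝒜 μ X ≤ outerOf 𝒜 μ Y := by
  unfold outerOf
  exact iInf_mono fun f => iInf_mono fun hf => iInf_mono' fun hY => ⟨h.trans hY, le_rfl⟩

lemma finadd (h𝒜 : IsRingOfSets 𝒜) (hμ0 : μ ∅ = 0)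
    (hσ : ∀ f : ℕ → Set Ω, (∀ i, f i ∈ 𝒜) → Pairwise (Function.onFun Disjoint f) →
      (⋃ i, f i) ∈ 𝒜 → μ (⋃ i, f i) = ∑' i, μ (f i))
    {A B : Set Ω} (hA : A ∈ 𝒜) (hB : B ∈ 𝒜) : μ B = μ (B ∩ A) + μ (B \ A) := by
  classical
  set f : ℕ → Set Ω := fun n => if n = 0 then B ∩ A else if n = 1 then B \ A else ∅ with hf
  have hfm : ∀ i, f i ∈ 𝒜 := by
    intro i
    match i with
    | 0 => exact h𝒜.inter_mem B hB A hA
    | 1 => exact h𝒜.diff_mem B hB A hA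
    | (i+2) => simpa [f] using empty_mem h𝒜
  have hd : Disjoint (B ∩ A) (B \ A) :=
    Set.disjoint_sdiff_right.mono_left Set.inter_subset_right
  have hpd : Pairwise (Function.onFun Disjoint f) := by
    intro i j hij
    unfold Function.onFun
    match i, j with
    | 0, 0 => exact absurd rfl hij
    | 1, 1 => exact absurd rfl hij
    | 0, 1 => simpa [f] using hd
    | 1, 0 => simpa [f] using hd.symm
    | 0, (j+2) => simp [f]
    | 1, (j+2) => simp [f]
    | (i+2), j => simp [f]
  have hun : (⋃ i, f i) = B := by
    apply Set.Subset.antisymm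
    · refine Set.iUnion_subset fun i => ?_
      match i with
      | 0 => exact Set.inter_subset_left
      | 1 => exact Set.diff_subset
      | (i+2) => simp [f]
    · intro x hx
      by_cases hxA : x ∈ A
      · exact Set.mem_iUnion.2 ⟨0, by simp [f, hx, hxA]⟩
      · exact Set.mem_iUnion.2 ⟨1, by simp [f, hx, hxA]⟩
  have := hσ f hfm hpd (hun ▸ hB)
  rw [hun] at this
  rw [this, tsum_eq_sum (s := {0, 1}) (f := fun i => μ (f i)) ?_]
  · simp [f]
  · intro i hi
    match i with
    | 0 => simp at hi
    | 1 => simp at hi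
    | (i+2) => simp [f, hμ0]

lemma carath_iff {O : OuterMeasure Ω} (hO : ⇑O = outerOf 𝒜 μ) {X : Set Ω} :
    X ∈ carathOf 𝒜 μ ↔ O.IsCaratheodory X := by
  simp only [carathOf, Set.mem_setOf_eq, OuterMeasure.IsCaratheodory, hO]

lemma cara_of_mem {O : OuterMeasure Ω} (hO : ⇑O = outerOf 𝒜 μ)
    (h𝒜 : IsRingOfSets 𝒜) (hμ0 : μ ∅ = 0)
    (hσ : ∀ f : ℕ → Set Ω, (∀ i, f i ∈ 𝒜) → Pairwise (Function.onFun Disjoint f) →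
      (⋃ i, f i) ∈ 𝒜 → μ (⋃ i, f i) = ∑' i, μ (f i))
    {A : Set Ω} (hA : A ∈ 𝒜) : O.IsCaratheodory A := by
  intro Y
  refine le_antisymm ?_ ?_
  · calc O Y = O ((Y ∩ A) ∪ (Y \ A)) := by rw [Set.inter_union_diff]
      _ ≤ O (Y ∩ A) + O (Y \ A) := measure_union_le _ _
  · rw [hO]
    have key : ∀ g : ℕ → Set Ω, (∀ i, g i ∈ 𝒜) → Y ⊆ ⋃ i, g i →
        outerOf 𝒜 μ (Y ∩ A) + outerOf 𝒜 μ (Y \ A) ≤ ∑' i, μ (g i) := by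
      intro g hg hYg
      have h1 : outerOf 𝒜 μ (Y ∩ A) ≤ ∑' i, μ (g i ∩ A) :=
        outerOf_le_tsum (fun i => h𝒜.inter_mem _ (hg i) A hA)
          (by rw [← Set.iUnion_inter]; exact Set.inter_subset_inter_left _ hYg)
      have h2 : outerOf 𝒜 μ (Y \ A) ≤ ∑' i, μ (g i \ A) :=
        outerOf_le_tsum (fun i => h𝒜.diff_mem _ (hg i) A hA)
          (by rw [← Set.iUnion_diff]; exact Set.diff_subset_diff_left hYg)
      calc outerOf 𝒜 μ (Y ∩ A) + outerOf 𝒜 μ (Y \ A)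
          ≤ (∑' i, μ (g i ∩ A)) + ∑' i, μ (g i \ A) := add_le_add h1 h2
        _ = ∑' i, (μ (g i ∩ A) + μ (g i \ A)) := (ENNReal.tsum_add).symm
        _ = ∑' i, μ (g i) := tsum_congr fun i => (finadd h𝒜 hμ0 hσ hA (hg i)).symm
    conv_rhs => rw [outerOf]
    exact le_iInf fun g => le_iInf fun hg => le_iInf fun hYg => key g hg hYg

lemma cara_null {O : OuterMeasure Ω} {X : Set Ω} (h : O X = 0) : O.IsCaratheodory X := by
  intro Y
  refine le_antisymm (measure_le_inter_add_diff _ _ _) ?_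
  have h1 : O (Y ∩ X) = 0 :=
    le_antisymm (le_trans (measure_mono Set.inter_subset_right) h.le) zero_le
  rw [h1, zero_add]
  exact measure_mono Set.diff_subset

lemma cara_add {O : OuterMeasure Ω} {H : Set Ω} (hH : O.IsCaratheodory H) (K : Set Ω) :
    O (H ∪ K) + O (H ∩ K) = O H + O K := by
  have h1 : O K = O (K ∩ H) + O (K \ H) := hH K
  have h2 : O (H ∪ K) = O H + O (K \ H) := by
    have := hH (H ∪ K)
    rwa [Set.union_inter_cancel_left, Set.union_diff_left] at this
  rw [h2, h1, Set.inter_comm K H]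
  ring

lemma exists_hull {O : OuterMeasure Ω} (hO : ⇑O = outerOf 𝒜 μ)
    (h𝒜 : IsRingOfSets 𝒜) (hμ0 : μ ∅ = 0)
    (hσ : ∀ f : ℕ → Set Ω, (∀ i, f i ∈ 𝒜) → Pairwise (Function.onFun Disjoint f) →
      (⋃ i, f i) ∈ 𝒜 → μ (⋃ i, f i) = ∑' i, μ (f i))
    {X : Set Ω} (hX : O X ≠ ⊤) :
    ∃ H : Set Ω, O.IsCaratheodory H ∧ X ⊆ H ∧ O H = O X := by
  have hcov : ∀ n : ℕ, ∃ g : ℕ → Set Ω, (∀ i, g i ∈ 𝒜) ∧ (X ⊆ ⋃ i, g i) ∧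
      ∑' i, μ (g i) ≤ O X + ((n : ℝ≥0∞) + 1)⁻¹ := by
    intro n
    by_contra hcon
    push_neg at hcon
    have hle : O X + ((n : ℝ≥0∞) + 1)⁻¹ ≤ outerOf 𝒜 μ X := by
      rw [outerOf]
      exact le_iInf fun g => le_iInf fun hg => le_iInf fun hXg => (hcon g hg hXg).le
    rw [← hO] at hle
    exact absurd hle (not_le.2 (ENNReal.lt_add_right hX (by simp)))
  choose g hg1 hg2 hg3 using hcov
  set U : ℕ → Set Ω := fun n => ⋃ i, g n i with hU
  have hUc : ∀ n, O.IsCaratheodory (U n) := fun n =>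
    O.isCaratheodory_iUnion fun i => cara_of_mem hO h𝒜 hμ0 hσ (hg1 n i)
  refine ⟨⋂ n, U n, ?_, Set.subset_iInter hg2, ?_⟩
  · have h : (⋂ n, U n) = (⋃ n, (U n)ᶜ)ᶜ := by
      rw [Set.compl_iUnion]; simp
    rw [h]
    exact O.isCaratheodory_compl
      (O.isCaratheodory_iUnion fun n => O.isCaratheodory_compl (hUc n))
  · refine le_antisymm ?_ (measure_mono (Set.subset_iInter hg2))
    refine ENNReal.le_of_forall_pos_le_add fun ε hε _ => ?_
    obtain ⟨n, hn⟩ := ENNReal.exists_inv_nat_lt (a := (ε : ℝ≥0∞))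
      (by exact_mod_cast hε.ne')
    calc O (⋂ m, U m) ≤ O (U n) := measure_mono (Set.iInter_subset _ n)
      _ ≤ ∑' i, μ (g n i) := by rw [hO]; exact outerOf_le_tsum (hg1 n) subset_rfl
      _ ≤ O X + ((n : ℝ≥0∞) + 1)⁻¹ := hg3 n
      _ ≤ O X + ε := by
          gcongr
          exact le_trans (ENNReal.inv_le_inv.2 le_self_add) hn.le

lemma cara_of_add_eq {O : OuterMeasure Ω} (hO : ⇑O = outerOf 𝒜 μ)
    (h𝒜 : IsRingOfSets 𝒜) (hμ0 : μ ∅ = 0)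
    (hσ : ∀ f : ℕ → Set Ω, (∀ i, f i ∈ 𝒜) → Pairwise (Function.onFun Disjoint f) →
      (⋃ i, f i) ∈ 𝒜 → μ (⋃ i, f i) = ∑' i, μ (f i))
    (hfin : O Set.univ ≠ ⊤) {X : Set Ω}
    (h : O X + O Xᶜ = O Set.univ) : O.IsCaratheodory X := by
  have hXfin : O X ≠ ⊤ := ((measure_mono (Set.subset_univ X)).trans_lt hfin.lt_top).ne
  have hXcfin : O Xᶜ ≠ ⊤ := ((measure_mono (Set.subset_univ Xᶜ)).trans_lt hfin.lt_top).ne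
  obtain ⟨H, hHc, hXH, hHeq⟩ := exists_hull hO h𝒜 hμ0 hσ hXfin
  obtain ⟨K, hKc, hXK, hKeq⟩ := exists_hull hO h𝒜 hμ0 hσ hXcfin
  have hHK : H ∪ K = Set.univ := Set.univ_subset_iff.1 (by
    rw [← Set.union_compl_self X]; exact Set.union_subset_union hXH hXK)
  have hadd := cara_add hHc K
  rw [hHK, hHeq, hKeq, h] at hadd
  have h0 : O (H ∩ K) = 0 := by
    have h' : O Set.univ + O (H ∩ K) = O Set.univ + 0 := by rw [add_zero, hadd]
    exact (ENNReal.add_right_inj hfin).1 h'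
  have hsub : H \ X ⊆ H ∩ K := fun x hx => ⟨hx.1, hXK hx.2⟩
  have hnull : O (H \ X) = 0 :=
    le_antisymm ((measure_mono hsub).trans h0.le) zero_le
  have hXe : X = H \ (H \ X) := (Set.diff_diff_cancel_left hXH).symm
  rw [hXe]
  exact O.isCaratheodory_diff hHc (cara_null hnull)

end Stmt5Aux

open Stmt5Aux in
/-- Let μ be a non-atomic finite-valued pre-measure on a ring 𝒜 over Ω with
μ̄(Ω) < +∞, and let ν be a finitely additive measure on all subsets of Ω, with finite
values, agreeing with the outer measure μ̄ on the Caratheodory σ-algebra C_μ and with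
ν ≤ μ̄ everywhere. Then the following are equivalent:
(1) every X ∉ C_μ satisfies ν(X) < μ̄(X) and ν(Xᶜ) < μ̄(Xᶜ);
(2) ν(X) = μ̄(X) iff ν(Xᶜ) = μ̄(Xᶜ);
(3) ν(X) = 0 iff μ̄(X) = 0. -/
theorem stmt5 {Ω : Type*} [Nonempty Ω] (𝒜 : Set (Set Ω)) (h𝒜 : IsRingOfSets 𝒜)
    (μ : Set Ω → ℝ≥0∞) (hμfin : ∀ A ∈ 𝒜, μ A ≠ ⊤) (hμ0 : μ ∅ = 0)
    (hσ : ∀ f : ℕ → Set Ω, (∀ i, f i ∈ 𝒜) → Pairwise (Function.onFun Disjoint f) →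
      (⋃ i, f i) ∈ 𝒜 → μ (⋃ i, f i) = ∑' i, μ (f i))
    (hna : ∀ A ∈ 𝒜, A.Finite → μ A = 0)
    (hΩfin : outerOf 𝒜 μ Set.univ < ⊤)
    (ν : Set Ω → ℝ≥0∞) (hνfin : ∀ X : Set Ω, ν X ≠ ⊤) (hν0 : ν ∅ = 0)
    (hνadd : ∀ A B : Set Ω, Disjoint A B → ν (A ∪ B) = ν A + ν B)
    (hνC : ∀ C ∈ carathOf 𝒜 μ, ν C = outerOf 𝒜 μ C)
    (hνle : ∀ X : Set Ω, ν X ≤ outerOf 𝒜 μ X) :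
    ((∀ X : Set Ω, X ∉ carathOf 𝒜 μ →
        ν X < outerOf 𝒜 μ X ∧ ν Xᶜ < outerOf 𝒜 μ Xᶜ) ↔
      (∀ X : Set Ω, ν X = outerOf 𝒜 μ X ↔ ν Xᶜ = outerOf 𝒜 μ Xᶜ)) ∧
    ((∀ X : Set Ω, ν X = outerOf 𝒜 μ X ↔ ν Xᶜ = outerOf 𝒜 μ Xᶜ) ↔
      (∀ X : Set Ω, ν X = 0 ↔ outerOf 𝒜 μ X = 0)) := by
  obtain ⟨O, hO⟩ := exists_outer (empty_mem h𝒜) hμ0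
  simp only [← hO] at hΩfin hνC hνle ⊢
  -- basic facts
  have hOu : O Set.univ ≠ ⊤ := hΩfin.ne
  have hcompl : ∀ {X : Set Ω}, X ∈ carathOf 𝒜 μ → Xᶜ ∈ carathOf 𝒜 μ := by
    intro X hX
    exact (carath_iff hO).2 (O.isCaratheodory_compl ((carath_iff hO).1 hX))
  have huniv : Set.univ ∈ carathOf 𝒜 μ := by
    have : (∅ : Set Ω)ᶜ = Set.univ := Set.compl_empty
    rw [← this]
    exact (carath_iff hO).2 (O.isCaratheodory_compl (O.isCaratheodory_empty))
  have hνuniv : ν Set.univ = O Set.univ := hνC _ huniv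
  -- names for the three statements
  set P1 : Prop := ∀ X : Set Ω, X ∉ carathOf 𝒜 μ → ν X < O X ∧ ν Xᶜ < O Xᶜ with hP1
  -- (2) → (1)
  have p21 : (∀ X : Set Ω, ν X = O X ↔ ν Xᶜ = O Xᶜ) → P1 := by
    intro h2 X hXC
    have hne : ν X ≠ O X := by
      intro hX
      have hXc : ν Xᶜ = O Xᶜ := (h2 X).1 hX
      have hsum : O X + O Xᶜ = O Set.univ := by
        rw [← hX, ← hXc, ← hνadd X Xᶜ disjoint_compl_right, Set.union_compl_self, hνuniv]
      exact hXC ((carath_iff hO).2 (cara_of_add_eq hO h𝒜 hμ0 hσ hOu hsum))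
    exact ⟨lt_of_le_of_ne (hνle X) hne,
      lt_of_le_of_ne (hνle Xᶜ) fun h => hne ((h2 X).2 h)⟩
  -- (1) → (2)
  have p12 : P1 → (∀ X : Set Ω, ν X = O X ↔ ν Xᶜ = O Xᶜ) := by
    intro h1 X
    constructor
    · intro hX
      by_cases hXC : X ∈ carathOf 𝒜 μ
      · exact hνC Xᶜ (hcompl hXC)
      · exact absurd hX (h1 X hXC).1.ne
    · intro hXc
      by_cases hXC : Xᶜ ∈ carathOf 𝒜 μ
      · have h' := hcompl hXC
        rw [compl_compl] at h'
        exact hνC X h'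
      · exact absurd hXc (h1 Xᶜ hXC).1.ne
  -- (2) → (3)
  have p23 : (∀ X : Set Ω, ν X = O X ↔ ν Xᶜ = O Xᶜ) →
      (∀ X : Set Ω, ν X = 0 ↔ O X = 0) := by
    intro h2 X
    constructor
    · intro hν0X
      have hu : ν Set.univ = ν Xᶜ := by
        have h' := hνadd X Xᶜ disjoint_compl_right
        rw [Set.union_compl_self, hν0X, zero_add] at h'
        exact h'
      have hXc : ν Xᶜ = O Xᶜ := le_antisymm (hνle _)
        (calc O Xᶜ ≤ O Set.univ := measure_mono (Set.subset_univ _)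
          _ = ν Set.univ := hνuniv.symm
          _ = ν Xᶜ := hu)
      have hX : ν X = O X := (h2 X).2 hXc
      rw [← hX, hν0X]
    · intro hoX
      exact le_antisymm ((hνle X).trans hoX.le) zero_le
  -- (3) → (2)
  have p32 : (∀ X : Set Ω, ν X = 0 ↔ O X = 0) →
      (∀ X : Set Ω, ν X = O X ↔ ν Xᶜ = O Xᶜ) := by
    intro h3
    have main : ∀ Y : Set Ω, ν Y = O Y → ν Yᶜ = O Yᶜ := by
      intro Y hY
      have hYfin : O Y ≠ ⊤ := ((measure_mono (Set.subset_univ Y)).trans_lt hOu.lt_top).ne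
      obtain ⟨H, hHc, hYH, hHeq⟩ := exists_hull hO h𝒜 hμ0 hσ hYfin
      have hHC : H ∈ carathOf 𝒜 μ := (carath_iff hO).2 hHc
      have hνH : ν H = O H := hνC H hHC
      have hνHY : ν (H \ Y) = 0 := by
        have hsplit : ν Y + ν (H \ Y) = ν Y + 0 := by
          rw [add_zero, ← hνadd Y (H \ Y) Set.disjoint_sdiff_right,
            Set.union_diff_cancel hYH, hνH, hHeq, hY]
        exact (ENNReal.add_right_inj (hνfin Y)).1 hsplit
      have hoHY : O (H \ Y) = 0 := (h3 _).1 hνHY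
      have hYc : Yᶜ = Hᶜ ∪ (H \ Y) := by
        ext x
        constructor
        · intro hx
          by_cases hxH : x ∈ H
          · exact Or.inr ⟨hxH, hx⟩
          · exact Or.inl hxH
        · rintro (hx | hx)
          · exact fun hY' => hx (hYH hY')
          · exact hx.2
      have hdis : Disjoint (Hᶜ) (H \ Y) :=
        disjoint_compl_left.mono_right Set.diff_subset
      have hνYc : ν Yᶜ = ν Hᶜ := by rw [hYc, hνadd _ _ hdis, hνHY, add_zero]
      have hoYc : O Yᶜ = O Hᶜ := by
        refine le_antisymm ?_ (measure_mono (Set.compl_subset_compl.2 hYH))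
        calc O Yᶜ = O (Hᶜ ∪ (H \ Y)) := by rw [hYc]
          _ ≤ O Hᶜ + O (H \ Y) := measure_union_le _ _
          _ = O Hᶜ := by rw [hoHY, add_zero]
      rw [hνYc, hoYc]
      exact hνC Hᶜ (hcompl hHC)
    intro X
    refine ⟨main X, fun h => ?_⟩
    have h' := main Xᶜ h
    rwa [compl_compl] at h'
  exact ⟨⟨p12, p21⟩, ⟨p23, p32⟩⟩
end

section
/- Let n : P(ℝ) → F be an elementary numerosity with values in a superreal field F (with embedding ι : ℝ → F) such that n([x, x+a)) = n([y, y+a)) for all x, y ∈ ℝ and all real a > 0. Then n([x, x+a)) = ι(a) · n([0,1)) for every x ∈ ℝ and every positive rational number a. -/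
open scoped ENNReal

/-- If an elementary numerosity on ℝ gives equal values to half-open intervals of equal
length, then n([x, x+a)) = ι(a) · n([0,1)) for every positive rational a. -/
theorem stmt10 {F : Type*} [Field F] [LinearOrder F] [IsStrictOrderedRing F] (ι : ℝ →+*o F)
    (n : Set ℝ → F)
    (hnonneg : ∀ X : Set ℝ, 0 ≤ n X)
    (hsingle : ∀ x : ℝ, n {x} = 1)
    (hadd : ∀ A B : Set ℝ, Disjoint A B → n (A ∪ B) = n A + n B)
    (hinv : ∀ x y a : ℝ, 0 < a → n (Set.Ico x (x + a)) = n (Set.Ico y (y + a))) :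
    ∀ (x : ℝ) (a : ℚ), 0 < a →
      n (Set.Ico x (x + (a : ℝ))) = ι (a : ℝ) * n (Set.Ico (0 : ℝ) 1) := by

  intro x a ha
  -- n of empty set is 0
  have hzero : n ∅ = 0 := by
    have h := hadd ∅ ∅ (Set.disjoint_empty _)
    simp only [Set.union_empty] at h
    linarith
  -- key lemma: n [x, x + m*ℓ) = m * n [0, ℓ)
  have key : ∀ (m : ℕ) (ℓ : ℝ), 0 < ℓ → ∀ y : ℝ,
      n (Set.Ico y (y + (m : ℝ) * ℓ)) = (m : F) * n (Set.Ico 0 ℓ) := by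
    intro m
    induction m with
    | zero => intro ℓ hℓ y; simp [hzero]
    | succ k ih =>
      intro ℓ hℓ y
      have h1 : y ≤ y + (k : ℝ) * ℓ := by nlinarith [Nat.cast_nonneg (α := ℝ) k]
      have h2 : y + (k : ℝ) * ℓ ≤ y + ((k : ℝ) + 1) * ℓ := by nlinarith
      have hsplit : Set.Ico y (y + ((k : ℕ) + 1 : ℝ) * ℓ)
          = Set.Ico y (y + (k : ℝ) * ℓ) ∪ Set.Ico (y + (k : ℝ) * ℓ) (y + ((k : ℝ) + 1) * ℓ) := by
        rw [Set.Ico_union_Ico_eq_Ico h1 h2]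
      have hdisj : Disjoint (Set.Ico y (y + (k : ℝ) * ℓ))
          (Set.Ico (y + (k : ℝ) * ℓ) (y + ((k : ℝ) + 1) * ℓ)) :=
        Set.Ico_disjoint_Ico_same
      have hsecond : n (Set.Ico (y + (k : ℝ) * ℓ) (y + ((k : ℝ) + 1) * ℓ)) = n (Set.Ico 0 ℓ) := by
        have : y + ((k : ℝ) + 1) * ℓ = (y + (k : ℝ) * ℓ) + ℓ := by ring
        rw [this]
        have := hinv (y + (k : ℝ) * ℓ) 0 ℓ hℓ
        simpa using this
      calc n (Set.Ico y (y + ((k : ℕ) + 1 : ℕ) * ℓ))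
          = n (Set.Ico y (y + (k : ℝ) * ℓ) ∪ Set.Ico (y + (k : ℝ) * ℓ) (y + ((k : ℝ) + 1) * ℓ)) := by
            push_cast
            rw [hsplit]
        _ = n (Set.Ico y (y + (k : ℝ) * ℓ)) + n (Set.Ico (y + (k : ℝ) * ℓ) (y + ((k : ℝ) + 1) * ℓ)) :=
            hadd _ _ hdisj
        _ = (k : F) * n (Set.Ico 0 ℓ) + n (Set.Ico 0 ℓ) := by rw [ih ℓ hℓ y, hsecond]
        _ = ((k + 1 : ℕ) : F) * n (Set.Ico 0 ℓ) := by push_cast; ring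
  set m : ℕ := a.num.toNat with hm
  have hden : (0 : ℝ) < (a.den : ℝ) := by exact_mod_cast a.pos
  set ℓ : ℝ := 1 / (a.den : ℝ) with hℓdef
  have hℓ : 0 < ℓ := by positivity
  have hnum : (m : ℝ) = (a.num : ℝ) := by
    exact_mod_cast congrArg (Int.cast : ℤ → ℝ) (Int.toNat_of_nonneg (Rat.num_nonneg.mpr ha.le))
  have haml : (a : ℝ) = (m : ℝ) * ℓ := by
    rw [hnum, hℓdef, Rat.cast_def]; ring
  have h1ml : (1 : ℝ) = (a.den : ℝ) * ℓ := by
    rw [hℓdef]; field_simp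
  -- compute both sides
  have lhs : n (Set.Ico x (x + (a : ℝ))) = (m : F) * n (Set.Ico 0 ℓ) := by
    rw [haml]; exact key m ℓ hℓ x
  have rhs : n (Set.Ico (0 : ℝ) 1) = (a.den : F) * n (Set.Ico 0 ℓ) := by
    have := key a.den ℓ hℓ 0
    rw [← h1ml] at this
    simpa using this
  rw [lhs, rhs]
  have hι : ι (a : ℝ) * (a.den : F) = (m : F) := by
    have h1 : ι (a : ℝ) * (a.den : F) = ι ((a : ℝ) * (a.den : ℝ)) := by
      rw [map_mul]; norm_cast
      simp
    rw [h1]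
    have h2 : (a : ℝ) * (a.den : ℝ) = (m : ℝ) := by
      rw [hnum, Rat.cast_def]; field_simp
    rw [h2]
    simp
  rw [← hι]; ring
end
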